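/- arXiv:1810.02810 — 7 statements merged into one kernel-verified Lean document; each statement's English description precedes it below -/
import Mathlib

section
/- Privacy of the Gaussian local randomizer (Theorem 3.1, with the sensitivity hypothesis made precise). Let d ≥ 1, r > 0, ε ∈ (0,1], δ ∈ (0,1). Let a, a' ∈ ℝ^d satisfy ‖a‖₂ ≤ r and ‖a'‖₂ ≤ r, and set σ² = 8 r² ln(2/δ) / ε² (i.e., σ = Δ·√(2 ln(2/δ))/ε with Δ = 2r ≥ ‖a − a'‖₂). Let μ be the d-fold product of one-dimensional Gaussian measures N(aᵢ, σ²) and μ' the d-fold product of N(a'ᵢ, σ²). Then for every measurable set O ⊆ ℝ^d, μ(O) ≤ e^ε · μ'(O) + δ. -/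
open MeasureTheory ProbabilityTheory
open scoped NNReal ENNReal

lemma my_lintegral_pi_prod {n : ℕ} (μ : Fin n → Measure ℝ) [∀ i, SigmaFinite (μ i)]
    (f : Fin n → ℝ → ℝ≥0∞) (hf : ∀ i, Measurable (f i)) :
    ∫⁻ x, ∏ i, f i (x i) ∂(Measure.pi μ) = ∏ i, ∫⁻ y, f i y ∂(μ i) := by
  induction n with
  | zero => simp [Measure.pi_of_empty]
  | succ n ih =>
    have h := (measurePreserving_piFinSuccAbove μ 0).symm
    rw [← h.lintegral_comp_emb (MeasurableEquiv.measurableEmbedding _)]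
    simp_rw [MeasurableEquiv.piFinSuccAbove_symm_apply, Fin.insertNthEquiv,
      Fin.prod_univ_succ, Fin.insertNth_zero, Equiv.coe_fn_mk, cast_eq,
      Fin.zero_succAbove, Fin.cons_zero, Fin.cons_succ]
    rw [lintegral_prod_mul (f := f 0) (g := fun y : Fin n → ℝ => ∏ i, f i.succ (y i))
      (hf 0).aemeasurable
      (Finset.measurable_prod Finset.univ
        (fun i _ => (hf i.succ).comp (measurable_pi_apply i))).aemeasurable]
    rw [ih (fun i => μ i.succ) (fun i => f i.succ) (fun i => hf i.succ)]

lemma my_pi_gaussian {n : ℕ} (m : Fin n → ℝ) {v : ℝ≥0} (hv : v ≠ 0) :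
    Measure.pi (fun i => gaussianReal (m i) v) =
      (Measure.pi fun _ : Fin n => (volume : Measure ℝ)).withDensity
        (fun x => ∏ i, gaussianPDF (m i) v (x i)) := by
  have := Measure.pi_eq (μ := fun i => gaussianReal (m i) v)
    (μ' := (Measure.pi fun _ : Fin n => (volume : Measure ℝ)).withDensity
        (fun x => ∏ i, gaussianPDF (m i) v (x i))) ?_
  · exact this
  intro s hs
  rw [withDensity_apply _ (MeasurableSet.univ_pi hs)]
  have : ∀ x : Fin n → ℝ, (Set.univ.pi s).indicator
      (fun x => ∏ i, gaussianPDF (m i) v (x i)) x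
      = ∏ i, (s i).indicator (gaussianPDF (m i) v) (x i) := by
    intro x
    by_cases hx : x ∈ Set.univ.pi s
    · rw [Set.indicator_of_mem hx]
      exact Finset.prod_congr rfl fun i _ =>
        (Set.indicator_of_mem (hx i (Set.mem_univ i)) _).symm
    · rw [Set.indicator_of_notMem hx]
      have hex : ∃ i, x i ∉ s i := by
        by_contra hcon
        push_neg at hcon
        exact hx fun i _ => hcon i
      obtain ⟨i, hi⟩ := hex
      exact (Finset.prod_eq_zero (Finset.mem_univ i)
        (by rw [Set.indicator_of_notMem hi])).symm
  rw [← lintegral_indicator (MeasurableSet.univ_pi hs)]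
  simp_rw [this]
  rw [my_lintegral_pi_prod _ _ (fun i => (measurable_gaussianPDF _ _).indicator (hs i))]
  exact Finset.prod_congr rfl fun i _ => by
    rw [lintegral_indicator (hs i), gaussianReal_apply _ hv]

lemma my_exp_tilt (c m : ℝ) {v : ℝ≥0} (hv : v ≠ 0) (y : ℝ) :
    Real.exp (c * y) * gaussianPDFReal m v y
      = Real.exp (c * m + c ^ 2 * v / 2) * gaussianPDFReal (m + c * v) v y := by
  have hv0 : (0:ℝ) < v := NNReal.coe_pos.mpr hv.bot_lt
  have hE : c * y + (-(y - m) ^ 2 / (2 * (v:ℝ)))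
      = (c * m + c ^ 2 * v / 2) + (-(y - (m + c * v)) ^ 2 / (2 * (v:ℝ))) := by
    field_simp
    ring
  simp only [gaussianPDFReal]
  rw [mul_left_comm, ← Real.exp_add, mul_left_comm, ← Real.exp_add, hE]

lemma my_lintegral_exp_gaussian (c m : ℝ) {v : ℝ≥0} (hv : v ≠ 0) :
    ∫⁻ y, ENNReal.ofReal (Real.exp (c * y)) * gaussianPDF m v y
      = ENNReal.ofReal (Real.exp (c * m + c ^ 2 * v / 2)) := by
  have h1 : ∀ y, ENNReal.ofReal (Real.exp (c * y)) * gaussianPDF m v y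
      = ENNReal.ofReal (Real.exp (c * m + c ^ 2 * v / 2)) * gaussianPDF (m + c * v) v y := by
    intro y
    rw [gaussianPDF_def, ← ENNReal.ofReal_mul (Real.exp_nonneg _), my_exp_tilt c m hv y,
      ENNReal.ofReal_mul (Real.exp_nonneg _), gaussianPDF_def]
  simp_rw [h1]
  rw [lintegral_const_mul _ (measurable_gaussianPDF _ _), lintegral_gaussianPDF_eq_one _ hv,
    mul_one]

lemma my_ratio (A A' : ℝ) {v : ℝ≥0} (hv : v ≠ 0) (y : ℝ) :
    gaussianPDFReal A v y
      = Real.exp (((y - A') ^ 2 - (y - A) ^ 2) / (2 * (v:ℝ))) * gaussianPDFReal A' v y := by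
  have hv0 : (0:ℝ) < v := NNReal.coe_pos.mpr hv.bot_lt
  have hE : ((y - A') ^ 2 - (y - A) ^ 2) / (2 * (v:ℝ)) + (-(y - A') ^ 2 / (2 * (v:ℝ)))
      = -(y - A) ^ 2 / (2 * (v:ℝ)) := by
    field_simp
    ring
  simp only [gaussianPDFReal]
  rw [mul_left_comm, ← Real.exp_add, hE]


set_option maxHeartbeats 2000000 in
/-- Privacy of the Gaussian local randomizer. For columns `a, a'` of
Euclidean norm at most `r` and `σ² = 8 r² ln(2/δ) / ε²`, the product of one-dimensional
Gaussians `N(aᵢ, σ²)` is `(ε, δ)`-close to the product of `N(a'ᵢ, σ²)` on every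
measurable set. -/
theorem gaussian_randomizer_privacy
    (d : ℕ) (hd : 1 ≤ d) (r ε δ : ℝ) (hr : 0 < r)
    (hε : 0 < ε) (hε1 : ε ≤ 1) (hδ0 : 0 < δ) (hδ1 : δ < 1)
    (a a' : Fin d → ℝ)
    (ha : Real.sqrt (∑ i, (a i) ^ 2) ≤ r)
    (ha' : Real.sqrt (∑ i, (a' i) ^ 2) ≤ r)
    (σ2 : ℝ≥0) (hσ2 : (σ2 : ℝ) = 8 * r ^ 2 * Real.log (2 / δ) / ε ^ 2)
    (O : Set (Fin d → ℝ)) (hO : MeasurableSet O) :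
    Measure.pi (fun i => gaussianReal (a i) σ2) O ≤
      ENNReal.ofReal (Real.exp ε) * Measure.pi (fun i => gaussianReal (a' i) σ2) O
        + ENNReal.ofReal δ := by
  -- basic positivity facts
  set Lg := Real.log (2 / δ) with hLg
  have hlog2 : (0.6931471803 : ℝ) < Real.log 2 := Real.log_two_gt_d9
  have hLge : Real.log 2 ≤ Lg := by
    apply Real.log_le_log (by norm_num)
    rw [le_div_iff₀ hδ0]; linarith
  have hLpos : 0 < Lg := by linarith
  have hv0 : (0:ℝ) < σ2 := by rw [hσ2]; positivity
  have hvne : σ2 ≠ 0 := (NNReal.coe_pos.mp hv0).ne'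
  -- the squared distance between means
  set D := ∑ i, (a i - a' i) ^ 2 with hDdef
  have hD0 : 0 ≤ D := Finset.sum_nonneg fun i _ => sq_nonneg _
  have hD4 : D ≤ 4 * r ^ 2 := by
    let u : EuclideanSpace ℝ (Fin d) := WithLp.toLp 2 a
    let w : EuclideanSpace ℝ (Fin d) := WithLp.toLp 2 a'
    have hu : ‖u‖ ≤ r := by
      rw [EuclideanSpace.norm_eq]
      simpa [u, Real.norm_eq_abs, sq_abs] using ha
    have hw : ‖w‖ ≤ r := by
      rw [EuclideanSpace.norm_eq]
      simpa [w, Real.norm_eq_abs, sq_abs] using ha'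
    have huw : ‖u - w‖ ≤ 2 * r := le_trans (norm_sub_le _ _) (by linarith)
    have hsq : Real.sqrt D ≤ 2 * r := by
      have : ‖u - w‖ = Real.sqrt D := by
        rw [EuclideanSpace.norm_eq]
        congr 1
        exact Finset.sum_congr rfl fun i _ => by
          simp [u, w, Real.norm_eq_abs, sq_abs, PiLp.sub_apply]
      linarith [this ▸ huw]
    nlinarith [Real.sq_sqrt hD0, Real.sqrt_nonneg D]
  -- density notation
  set G : (Fin d → ℝ) → ℝ≥0∞ := fun x => ∏ i, gaussianPDF (a i) σ2 (x i) with hGdef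
  set G' : (Fin d → ℝ) → ℝ≥0∞ := fun x => ∏ i, gaussianPDF (a' i) σ2 (x i) with hG'def
  have hGmeas : Measurable G :=
    Finset.measurable_prod _ fun i _ =>
      (measurable_gaussianPDF _ _).comp (measurable_pi_apply i)
  have hG'meas : Measurable G' :=
    Finset.measurable_prod _ fun i _ =>
      (measurable_gaussianPDF _ _).comp (measurable_pi_apply i)
  -- log-likelihood ratio
  set ℓ : Fin d → ℝ → ℝ :=
    fun i y => ((y - a' i) ^ 2 - (y - a i) ^ 2) / (2 * (σ2:ℝ)) with hℓdef
  set L : (Fin d → ℝ) → ℝ := fun x => ∑ i, ℓ i (x i) with hLdef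
  have hℓmeas : ∀ i, Measurable (ℓ i) := fun i =>
    ((((measurable_id.sub_const _).pow_const 2).sub
      ((measurable_id.sub_const _).pow_const 2)).div_const _)
  have hLmeas : Measurable L :=
    Finset.measurable_sum _ fun i _ => (hℓmeas i).comp (measurable_pi_apply i)
  have hGratio : ∀ x, G x = ENNReal.ofReal (Real.exp (L x)) * G' x := by
    intro x
    have h1 : ∀ i, gaussianPDF (a i) σ2 (x i)
        = ENNReal.ofReal (Real.exp (ℓ i (x i))) * gaussianPDF (a' i) σ2 (x i) := by
      intro i
      simp only [gaussianPDF_def]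
      rw [my_ratio (a i) (a' i) hvne (x i), ENNReal.ofReal_mul (Real.exp_nonneg _)]
    calc G x = ∏ i, (ENNReal.ofReal (Real.exp (ℓ i (x i))) * gaussianPDF (a' i) σ2 (x i)) :=
          Finset.prod_congr rfl fun i _ => h1 i
      _ = (∏ i, ENNReal.ofReal (Real.exp (ℓ i (x i)))) * G' x := Finset.prod_mul_distrib
      _ = ENNReal.ofReal (Real.exp (L x)) * G' x := by
          rw [hLdef, Real.exp_sum, ENNReal.ofReal_prod_of_nonneg
            (fun i _ => Real.exp_nonneg _)]
  -- rewrite the measures as densities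
  set pvol : Measure (Fin d → ℝ) := Measure.pi fun _ => (volume : Measure ℝ) with hpvol
  have hμ : Measure.pi (fun i => gaussianReal (a i) σ2) = pvol.withDensity G :=
    my_pi_gaussian a hvne
  have hμ' : Measure.pi (fun i => gaussianReal (a' i) σ2) = pvol.withDensity G' :=
    my_pi_gaussian a' hvne
  rw [hμ, hμ']
  -- split the set
  set S : Set (Fin d → ℝ) := {x | L x ≤ ε} with hSdef
  have hSmeas : MeasurableSet S := measurableSet_le hLmeas measurable_const
  have hsplit : pvol.withDensity G O
      ≤ pvol.withDensity G (O ∩ S) + pvol.withDensity G Sᶜ := by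
    refine le_trans (measure_mono ?_) (measure_union_le _ _)
    intro x hx
    by_cases h : x ∈ S
    · exact Or.inl ⟨hx, h⟩
    · exact Or.inr h
  -- part 1
  have hpart1 : pvol.withDensity G (O ∩ S)
      ≤ ENNReal.ofReal (Real.exp ε) * pvol.withDensity G' O := by
    rw [withDensity_apply _ (hO.inter hSmeas)]
    have : ∫⁻ x in O ∩ S, G x ∂pvol
        ≤ ∫⁻ x in O ∩ S, ENNReal.ofReal (Real.exp ε) * G' x ∂pvol := by
      refine setLIntegral_mono (hG'meas.const_mul _) fun x hx => ?_
      rw [hGratio x]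
      exact mul_le_mul_left
        (ENNReal.ofReal_le_ofReal (Real.exp_le_exp.mpr hx.2)) _
    refine le_trans this ?_
    rw [lintegral_const_mul _ hG'meas]
    refine mul_le_mul_right ?_ _
    rw [withDensity_apply _ hO]
    exact lintegral_mono_set Set.inter_subset_left
  -- part 2 : the tail bound
  have hpart2 : pvol.withDensity G Sᶜ ≤ ENNReal.ofReal δ := by
    set t : ℝ := 2 * Lg / ε - 1 / 2 with htdef
    have ht0 : 0 < t := by
      rw [htdef, sub_pos, lt_div_iff₀ hε]
      nlinarith
    -- pointwise bound on Sᶜ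
    have hstep1 : pvol.withDensity G Sᶜ
        ≤ ∫⁻ x, ENNReal.ofReal (Real.exp (t * L x - t * ε)) * G x ∂pvol := by
      rw [withDensity_apply _ hSmeas.compl]
      have hfm0 : Measurable fun x => ENNReal.ofReal (Real.exp (t * L x - t * ε)) * G x :=
        (((hLmeas.const_mul t).sub_const (t * ε)).exp.ennreal_ofReal).mul hGmeas
      refine le_trans (setLIntegral_mono hfm0
        (fun x hx => ?_)) (setLIntegral_le_lintegral _ _)
      have hεlt : ε < L x := lt_of_not_ge hx
      calc G x = 1 * G x := (one_mul _).symm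
        _ ≤ ENNReal.ofReal (Real.exp (t * L x - t * ε)) * G x :=
            mul_le_mul_left (by
              rw [ENNReal.one_le_ofReal]
              exact Real.one_le_exp (by nlinarith)) _
    -- pull out the constant
    have hstep2 : ∫⁻ x, ENNReal.ofReal (Real.exp (t * L x - t * ε)) * G x ∂pvol
        = ENNReal.ofReal (Real.exp (-(t * ε)))
          * ∫⁻ x, ENNReal.ofReal (Real.exp (t * L x)) * G x ∂pvol := by
      have hfm : Measurable fun x => ENNReal.ofReal (Real.exp (t * L x)) * G x :=
        ((hLmeas.const_mul t).exp.ennreal_ofReal).mul hGmeas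
      rw [← lintegral_const_mul _ hfm]
      refine lintegral_congr fun x => ?_
      rw [← mul_assoc, ← ENNReal.ofReal_mul (Real.exp_nonneg _), ← Real.exp_add]
      ring_nf
    -- compute the moment-generating integral
    set c : Fin d → ℝ := fun i => (a i - a' i) / (σ2:ℝ) with hcdef
    set b : Fin d → ℝ := fun i => ((a' i) ^ 2 - (a i) ^ 2) / (2 * (σ2:ℝ)) with hbdef
    have hlin : ∀ i y, t * ℓ i y = (t * c i) * y + t * b i := by
      intro i y
      rw [hℓdef, hcdef, hbdef]
      field_simp
      ring
    have hstep3 : ∫⁻ x, ENNReal.ofReal (Real.exp (t * L x)) * G x ∂pvol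
        = ENNReal.ofReal (Real.exp ((t + t ^ 2) * (D / (2 * (σ2:ℝ))))) := by
      have hpt : ∀ x, ENNReal.ofReal (Real.exp (t * L x)) * G x
          = ∏ i, (ENNReal.ofReal (Real.exp (t * ℓ i (x i)))
              * gaussianPDF (a i) σ2 (x i)) := by
        intro x
        rw [Finset.prod_mul_distrib, hLdef]
        simp only
        rw [Finset.mul_sum, Real.exp_sum,
          ENNReal.ofReal_prod_of_nonneg (fun i _ => Real.exp_nonneg _), hGdef]
      simp_rw [hpt]
      have hfm2 : ∀ i, Measurable fun y =>
          ENNReal.ofReal (Real.exp (t * ℓ i y)) * gaussianPDF (a i) σ2 y :=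
        fun i => (((hℓmeas i).const_mul t).exp.ennreal_ofReal).mul
          (measurable_gaussianPDF _ _)
      rw [my_lintegral_pi_prod _ _ hfm2]
      have hfac : ∀ i, ∫⁻ y, ENNReal.ofReal (Real.exp (t * ℓ i y))
            * gaussianPDF (a i) σ2 y
          = ENNReal.ofReal (Real.exp ((t + t ^ 2) * ((a i - a' i) ^ 2 / (2 * (σ2:ℝ))))) := by
        intro i
        have : ∀ y, ENNReal.ofReal (Real.exp (t * ℓ i y)) * gaussianPDF (a i) σ2 y
            = ENNReal.ofReal (Real.exp (t * b i))
              * (ENNReal.ofReal (Real.exp ((t * c i) * y)) * gaussianPDF (a i) σ2 y) := by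
          intro y
          rw [hlin i y, ← mul_assoc, ← ENNReal.ofReal_mul (Real.exp_nonneg _),
            ← Real.exp_add]
          ring_nf
        simp_rw [this]
        have hfm3 : Measurable fun y =>
            ENNReal.ofReal (Real.exp ((t * c i) * y)) * gaussianPDF (a i) σ2 y :=
          (((measurable_id.const_mul _).exp).ennreal_ofReal).mul
            (measurable_gaussianPDF _ _)
        rw [lintegral_const_mul _ hfm3,
          my_lintegral_exp_gaussian (t * c i) (a i) hvne,
          ← ENNReal.ofReal_mul (Real.exp_nonneg _), ← Real.exp_add]
        congr 2
        rw [hcdef, hbdef]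
        field_simp
        ring
      rw [Finset.prod_congr rfl fun i _ => hfac i,
        ← ENNReal.ofReal_prod_of_nonneg (fun i _ => Real.exp_nonneg _),
        ← Real.exp_sum]
      congr 2
      rw [hDdef, ← Finset.mul_sum, Finset.sum_div, Finset.mul_sum]
    -- the arithmetic inequality
    have harith : -(t * ε) + (t + t ^ 2) * (D / (2 * (σ2:ℝ))) ≤ Real.log δ := by
      have hlogδ : Real.log δ = Real.log 2 - Lg := by
        rw [hLg, Real.log_div (by norm_num) hδ0.ne']
        ring
      have hDv : D / (2 * (σ2:ℝ)) ≤ ε ^ 2 / (4 * Lg) := by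
        rw [hσ2, div_le_div_iff₀ (by rw [← hσ2]; positivity) (by positivity)]
        have h8 : 8 * r ^ 2 * Lg / ε ^ 2 * ε ^ 2 = 8 * r ^ 2 * Lg := by
          field_simp
        nlinarith [mul_le_mul_of_nonneg_right hD4 (le_of_lt hLpos)]
      have h1 : (t + t ^ 2) * (D / (2 * (σ2:ℝ))) ≤ (t + t ^ 2) * (ε ^ 2 / (4 * Lg)) :=
        mul_le_mul_of_nonneg_left hDv (by nlinarith)
      have h2 : -(t * ε) + (t + t ^ 2) * (ε ^ 2 / (4 * Lg)) ≤ Real.log 2 - Lg := by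
        rw [htdef]
        have heq : -((2 * Lg / ε - 1/2) * ε)
              + ((2 * Lg / ε - 1/2) + (2 * Lg / ε - 1/2) ^ 2) * (ε ^ 2 / (4 * Lg))
            = -Lg + ε/2 - ε^2/(16*Lg) := by
          field_simp
          ring
        rw [heq]
        have h1 : 0 ≤ ε^2/(16*Lg) := by positivity
        linarith
      linarith
    calc pvol.withDensity G Sᶜ
        ≤ ENNReal.ofReal (Real.exp (-(t * ε)))
          * ENNReal.ofReal (Real.exp ((t + t ^ 2) * (D / (2 * (σ2:ℝ))))) := by
          rw [← hstep3, ← hstep2]; exact hstep1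
      _ = ENNReal.ofReal (Real.exp (-(t * ε) + (t + t ^ 2) * (D / (2 * (σ2:ℝ))))) := by
          rw [← ENNReal.ofReal_mul (Real.exp_nonneg _), ← Real.exp_add]
      _ ≤ ENNReal.ofReal δ := by
          refine ENNReal.ofReal_le_ofReal ?_
          calc Real.exp (-(t * ε) + (t + t ^ 2) * (D / (2 * (σ2:ℝ))))
              ≤ Real.exp (Real.log δ) := Real.exp_le_exp.mpr harith
            _ = δ := Real.exp_log hδ0
  calc pvol.withDensity G O ≤ pvol.withDensity G (O ∩ S) + pvol.withDensity G Sᶜ := hsplit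
    _ ≤ ENNReal.ofReal (Real.exp ε) * pvol.withDensity G' O + ENNReal.ofReal δ :=
        add_le_add hpart1 hpart2
end

section
/- Accuracy of the Gaussian protocol without projection (first case of Theorem 3.2). Let d, J, n ≥ 1, r > 0, ε > 0, δ ∈ (0,1). Let A ∈ ℝ^{d×J} have columns a₁, …, a_J with ‖a_j‖₂ ≤ r for all j, and let p ∈ Simplex(J). Let v₁, …, v_n be i.i.d. samples from p, let z₁, …, z_n be i.i.d. d-dimensional Gaussian vectors with independent N(0, σ²) coordinates where σ² = 2 r² ln(2/δ)/ε², independent of the v_i's, and set ȳ = (1/n) Σ_{i=1}^n (a_{v_i} + z_i). Then E‖ȳ − A p‖₂ ≤ r·√(2 d ln(2/δ)/(n ε²)) + r/√n. -/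
open MeasureTheory ProbabilityTheory
open scoped NNReal ENNReal

/-- The measure on `Fin J` corresponding to a probability vector `p` (when `p` lies in the
probability simplex, this is the distribution assigning mass `p j` to `j`). -/
noncomputable def discMeasure {J : ℕ} (p : Fin J → ℝ) : Measure (Fin J) :=
  ∑ j, ENNReal.ofReal (p j) • Measure.dirac j

section AuxGauss
open Real
variable {v : ℝ≥0}

variable {v : ℝ≥0}

lemma gauss_withDensity (hv : v ≠ 0) :
    gaussianReal 0 v = volume.withDensity fun x => ((gaussianPDFReal 0 v x).toNNReal : ℝ≥0∞) := by
  rw [gaussianReal_of_var_ne_zero 0 hv]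
  rfl

lemma gauss_integrable (hv : v ≠ 0) (g : ℝ → ℝ)
    (h : Integrable (fun x => gaussianPDFReal 0 v x * g x) volume) :
    Integrable g (gaussianReal 0 v) := by
  rw [gauss_withDensity hv,
    integrable_withDensity_iff_integrable_smul ((measurable_gaussianPDFReal 0 v).real_toNNReal)]
  refine h.congr (Filter.Eventually.of_forall fun x => ?_)
  simp [NNReal.smul_def, Real.coe_toNNReal _ (gaussianPDFReal_nonneg 0 v x)]

lemma gauss_integral (hv : v ≠ 0) (g : ℝ → ℝ) :
    ∫ x, g x ∂(gaussianReal 0 v) = ∫ x, gaussianPDFReal 0 v x * g x := by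
  rw [gauss_withDensity hv,
    integral_withDensity_eq_integral_smul ((measurable_gaussianPDFReal 0 v).real_toNNReal)]
  refine integral_congr_ae (Filter.Eventually.of_forall fun x => ?_)
  simp [NNReal.smul_def, Real.coe_toNNReal _ (gaussianPDFReal_nonneg 0 v x)]

lemma gauss_pdf_eq (hv : v ≠ 0) (x : ℝ) :
    gaussianPDFReal 0 v x = (√(2 * π * v))⁻¹ * rexp (-((2*(v:ℝ))⁻¹) * x ^ 2) := by
  have : (0:ℝ) < (v:ℝ) := lt_of_le_of_ne (v.coe_nonneg) (by exact_mod_cast (Ne.symm hv))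
  rw [gaussianPDFReal]
  congr 1
  rw [sub_zero]
  congr 1
  field_simp

lemma rpow_two' (x : ℝ) (hx : 0 ≤ x) : x ^ (2:ℝ) = x ^ 2 := by
  rw [show (2:ℝ) = ((2:ℕ):ℝ) by norm_num, Real.rpow_natCast]

lemma gauss_integrable_id (hv : v ≠ 0) : Integrable (fun x : ℝ => x) (gaussianReal 0 v) := by
  have hvpos : (0:ℝ) < (v:ℝ) := lt_of_le_of_ne v.coe_nonneg (by exact_mod_cast (Ne.symm hv))
  have hb : (0:ℝ) < (2*(v:ℝ))⁻¹ := by positivity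
  refine gauss_integrable hv _ ?_
  have := (integrable_mul_exp_neg_mul_sq hb).const_mul ((√(2 * π * v))⁻¹)
  refine this.congr (Filter.Eventually.of_forall fun x => ?_)
  simp only [gauss_pdf_eq hv]
  ring

lemma gauss_integral_id (hv : v ≠ 0) : ∫ x, x ∂(gaussianReal 0 v) = 0 := by
  have hmap := gaussianReal_map_const_mul (μ := 0) (v := v) (-1)
  have h1 : (NNReal.mk ((-1:ℝ) ^ 2) (sq_nonneg _) * v : ℝ≥0) = v := by
    ext; simp
  rw [h1, neg_one_mul, neg_zero] at hmap
  have h2 : ∫ x, x ∂(gaussianReal 0 v)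
      = ∫ x, (-1 : ℝ) * x ∂(gaussianReal 0 v) := by
    conv_lhs => rw [← hmap]
    rw [integral_map (φ := fun x : ℝ => (-1:ℝ) * x) (f := fun x : ℝ => x)
      (measurable_const_mul (-1:ℝ)).aemeasurable aestronglyMeasurable_id]
  have h4 : ∫ x : ℝ, (-1:ℝ) * x ∂(gaussianReal 0 v) = - ∫ x : ℝ, x ∂(gaussianReal 0 v) := by
    simp only [neg_one_mul]
    exact integral_neg _
  rw [h4] at h2
  linarith

lemma gauss_integrable_sq (hv : v ≠ 0) :
    Integrable (fun x : ℝ => x ^ 2) (gaussianReal 0 v) := by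
  have hvpos : (0:ℝ) < (v:ℝ) := lt_of_le_of_ne v.coe_nonneg (by exact_mod_cast (Ne.symm hv))
  have hb : (0:ℝ) < (2*(v:ℝ))⁻¹ := by positivity
  refine gauss_integrable hv _ ?_
  have := (integrable_rpow_mul_exp_neg_mul_sq hb (s := 2) (by norm_num)).const_mul
    ((√(2 * π * v))⁻¹)
  refine this.congr (Filter.Eventually.of_forall fun x => ?_)
  simp only [gauss_pdf_eq hv, Real.rpow_two]
  ring

lemma gauss_integral_sq (hv : v ≠ 0) : ∫ x, x ^ 2 ∂(gaussianReal 0 v) = v := by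
  have hvpos : (0:ℝ) < (v:ℝ) := lt_of_le_of_ne v.coe_nonneg (by exact_mod_cast (Ne.symm hv))
  have hb : (0:ℝ) < (2*(v:ℝ))⁻¹ := by positivity
  set c : ℝ := (√(2 * π * v))⁻¹ with hc
  have step1 : ∫ x, x ^ 2 ∂(gaussianReal 0 v)
      = c * ∫ x : ℝ, |x| ^ 2 * rexp (-(2*(v:ℝ))⁻¹ * |x| ^ 2) := by
    rw [gauss_integral hv, ← integral_const_mul]
    congr 1 with x
    rw [gauss_pdf_eq hv, sq_abs]
    ring
  have step2 : ∫ x : ℝ, |x| ^ 2 * rexp (-(2*(v:ℝ))⁻¹ * |x| ^ 2)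
      = 2 * ∫ x in Set.Ioi (0:ℝ), x ^ 2 * rexp (-(2*(v:ℝ))⁻¹ * x ^ 2) :=
    integral_comp_abs (f := fun x => x ^ 2 * rexp (-(2*(v:ℝ))⁻¹ * x ^ 2))
  have step3 : ∫ x in Set.Ioi (0:ℝ), x ^ 2 * rexp (-(2*(v:ℝ))⁻¹ * x ^ 2)
      = ((2*(v:ℝ))⁻¹) ^ (-(3:ℝ)/2) * (1/2) * Real.Gamma (3/2) := by
    have := integral_rpow_mul_exp_neg_mul_rpow (p := 2) (q := 2) (b := (2*(v:ℝ))⁻¹)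
      (by norm_num) (by norm_num) hb
    rw [show ((2:ℝ)+1)/2 = 3/2 by norm_num, show (-((2:ℝ)+1))/2 = -(3:ℝ)/2 by norm_num] at this
    rw [← this]
    refine setIntegral_congr_fun measurableSet_Ioi (fun x hx => ?_)
    rw [rpow_two' x (le_of_lt hx)]
  have hGamma : Real.Gamma (3/2) = √π / 2 := by
    rw [show (3:ℝ)/2 = 1/2 + 1 by norm_num, Real.Gamma_add_one (by norm_num),
      Real.Gamma_one_half_eq]
    ring
  set s : ℝ := √(2 * (v:ℝ)) with hs
  have hs0 : (0:ℝ) < s := Real.sqrt_pos.mpr (by positivity)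
  have hssq : s ^ 2 = 2 * (v:ℝ) := Real.sq_sqrt (by positivity)
  have h5 : (2*(v:ℝ))⁻¹ = s ^ (-2:ℝ) := by
    rw [Real.rpow_neg hs0.le, Real.rpow_two, hssq]
  have hpow : ((2*(v:ℝ))⁻¹) ^ (-(3:ℝ)/2) = s ^ 3 := by
    rw [h5, ← Real.rpow_natCast s 3, ← Real.rpow_mul hs0.le]
    norm_num
  have hcs : c = (√π * s)⁻¹ := by
    rw [hc, hs, show 2 * π * (v:ℝ) = π * (2 * (v:ℝ)) by ring,
      Real.sqrt_mul Real.pi_nonneg]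
  rw [step1, step2, step3, hGamma, hpow, hcs, pow_succ, hssq]
  have hπ : (0:ℝ) < √π := Real.sqrt_pos.mpr Real.pi_pos
  field_simp


lemma prod_two_ite {ι : Type*} [Fintype ι] [DecidableEq ι] {M : Type*} [CommMonoid M]
    {i i' : ι} (hne : i ≠ i') (u w : ι → M) :
    (∏ i'' : ι, (if i'' = i then u i'' else if i'' = i' then w i'' else 1)) = u i * w i' := by
  rw [← Finset.mul_prod_erase Finset.univ _ (Finset.mem_univ i),
    ← Finset.mul_prod_erase (Finset.univ.erase i) _
      (Finset.mem_erase.mpr ⟨Ne.symm hne, Finset.mem_univ i'⟩)]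
  rw [if_pos rfl, if_neg (Ne.symm hne), if_pos rfl]
  rw [Finset.prod_eq_one, mul_one]
  intro j hj
  rw [Finset.mem_erase] at hj
  obtain ⟨hj1, hj2⟩ := hj
  rw [Finset.mem_erase] at hj2
  rw [if_neg hj2.1, if_neg hj1]

section PiHelpers
variable {ι : Type*} [Fintype ι] [DecidableEq ι] {α : Type*} [MeasurableSpace α]
  (μ : Measure α) [IsProbabilityMeasure μ]

lemma integral_pi_eval (i : ι) (φ : α → ℝ) :
    ∫ x : ι → α, φ (x i) ∂(Measure.pi fun _ => μ) = ∫ a, φ a ∂μ := by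
  letI : MeasureSpace α := ⟨μ⟩
  haveI : IsProbabilityMeasure (volume : Measure α) := ‹IsProbabilityMeasure μ›
  have h := MeasureTheory.integral_fintype_prod_eq_prod (𝕜 := ℝ) (ι := ι) (μ := fun _ => volume)
    (fun i'' a => if i'' = i then φ a else (1:ℝ))
  simp only [Finset.prod_ite_eq', Finset.mem_univ, if_true] at h
  have hR : ∀ i'' : ι, (∫ a : α, (if i'' = i then φ a else (1:ℝ)))
      = if i'' = i then ∫ a : α, φ a else 1 := by
    intro i''; split <;> simp
  rw [Finset.prod_congr rfl (fun i'' _ => hR i''), Finset.prod_ite_eq',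
    if_pos (Finset.mem_univ i)] at h
  exact h

lemma integrable_pi_eval (i : ι) (φ : α → ℝ) (hφ : Integrable φ μ) :
    Integrable (fun x : ι → α => φ (x i)) (Measure.pi fun _ => μ) := by
  letI : MeasureSpace α := ⟨μ⟩
  haveI : IsProbabilityMeasure (volume : Measure α) := ‹IsProbabilityMeasure μ›
  have h : Integrable (fun x : ι → α => ∏ i'' : ι, (if i'' = i then φ (x i'') else (1:ℝ)))
      volume :=
    MeasureTheory.Integrable.fintype_prod
      (f := fun i'' a => if i'' = i then φ a else (1:ℝ))
      (fun i'' => by dsimp only; split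
                     · exact hφ
                     · exact integrable_const 1)
  have h2 : Integrable (fun x : ι → α => φ (x i)) volume :=
    h.congr (Filter.Eventually.of_forall fun x => by simp [Finset.prod_ite_eq'])
  exact h2

lemma integral_pi_eval_two {i i' : ι} (hne : i ≠ i') (φ ψ : α → ℝ) :
    ∫ x : ι → α, φ (x i) * ψ (x i') ∂(Measure.pi fun _ => μ)
      = (∫ a, φ a ∂μ) * ∫ a, ψ a ∂μ := by
  letI : MeasureSpace α := ⟨μ⟩
  haveI : IsProbabilityMeasure (volume : Measure α) := ‹IsProbabilityMeasure μ›
  have h := MeasureTheory.integral_fintype_prod_eq_prod (𝕜 := ℝ) (ι := ι) (μ := fun _ => volume)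
    (fun i'' a => if i'' = i then φ a else if i'' = i' then ψ a else (1:ℝ))
  have hL : ∀ x : ι → α,
      (∏ i'' : ι, (if i'' = i then φ (x i'') else if i'' = i' then ψ (x i'') else (1:ℝ)))
      = φ (x i) * ψ (x i') := fun x =>
    prod_two_ite hne (fun j => φ (x j)) (fun j => ψ (x j))
  have hR : ∀ i'' : ι, (∫ a : α, (if i'' = i then φ a else if i'' = i' then ψ a else (1:ℝ)))
      = if i'' = i then ∫ a : α, φ a else if i'' = i' then ∫ a : α, ψ a else 1 := by
    intro i''; split
    · rfl
    · split <;> simp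
  simp only [hL] at h
  rw [Finset.prod_congr rfl (fun i'' _ => hR i''),
    prod_two_ite hne (fun _ => ∫ a : α, φ a) (fun _ => ∫ a : α, ψ a)] at h
  exact h

lemma integrable_pi_eval_two {i i' : ι} (hne : i ≠ i') (φ ψ : α → ℝ)
    (hφ : Integrable φ μ) (hψ : Integrable ψ μ) :
    Integrable (fun x : ι → α => φ (x i) * ψ (x i')) (Measure.pi fun _ => μ) := by
  letI : MeasureSpace α := ⟨μ⟩
  haveI : IsProbabilityMeasure (volume : Measure α) := ‹IsProbabilityMeasure μ›
  have h : Integrable (fun x : ι → α =>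
      ∏ i'' : ι, (if i'' = i then φ (x i'') else if i'' = i' then ψ (x i'') else (1:ℝ)))
      volume :=
    MeasureTheory.Integrable.fintype_prod
      (f := fun i'' a => if i'' = i then φ a else if i'' = i' then ψ a else (1:ℝ))
      (fun i'' => by dsimp only; split
                     · exact hφ
                     · split
                       · exact hψ
                       · exact integrable_const 1)
  have h2 : Integrable (fun x : ι → α => φ (x i) * ψ (x i')) volume :=
    h.congr (Filter.Eventually.of_forall fun x =>
      prod_two_ite hne (fun j => φ (x j)) (fun j => ψ (x j)))
  exact h2

end PiHelpers

lemma core_sum_sq {α : Type*} [MeasurableSpace α] (ρ : Measure α) [IsProbabilityMeasure ρ]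
    (n : ℕ) (g : α → ℝ) (hg : Integrable g ρ) (hg2 : Integrable (fun a => g a ^ 2) ρ)
    (hmean : ∫ a, g a ∂ρ = 0) :
    Integrable (fun x : Fin n → α => (∑ i, g (x i)) ^ 2) (Measure.pi fun _ : Fin n => ρ) ∧
    ∫ x : Fin n → α, (∑ i, g (x i)) ^ 2 ∂(Measure.pi fun _ : Fin n => ρ)
      = n * ∫ a, g a ^ 2 ∂ρ := by
  have hexp : ∀ x : Fin n → α, (∑ i, g (x i)) ^ 2 = ∑ i, ∑ i', g (x i) * g (x i') := by
    intro x; rw [sq, Finset.sum_mul_sum]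
  have hint : ∀ i i' : Fin n,
      Integrable (fun x : Fin n → α => g (x i) * g (x i')) (Measure.pi fun _ : Fin n => ρ) := by
    intro i i'
    rcases eq_or_ne i i' with rfl | hne
    · have := integrable_pi_eval ρ i (fun a => g a ^ 2) hg2
      exact this.congr (Filter.Eventually.of_forall fun x => by simp [sq])
    · exact integrable_pi_eval_two ρ hne g g hg hg
  have hIsum : Integrable (fun x : Fin n → α => ∑ i, ∑ i', g (x i) * g (x i'))
      (Measure.pi fun _ : Fin n => ρ) :=
    integrable_finset_sum _ fun i _ => integrable_finset_sum _ fun i' _ => hint i i'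
  have hval : ∀ i i' : Fin n,
      ∫ x : Fin n → α, g (x i) * g (x i') ∂(Measure.pi fun _ : Fin n => ρ)
        = if i = i' then ∫ a, g a ^ 2 ∂ρ else 0 := by
    intro i i'
    rcases eq_or_ne i i' with rfl | hne
    · rw [if_pos rfl, ← integral_pi_eval ρ i (fun a => g a ^ 2)]
      congr 1 with x
      simp [sq]
    · rw [if_neg hne, integral_pi_eval_two ρ hne g g, hmean, mul_zero]
  constructor
  · exact hIsum.congr (Filter.Eventually.of_forall fun x => (hexp x).symm)
  · calc ∫ x : Fin n → α, (∑ i, g (x i)) ^ 2 ∂(Measure.pi fun _ : Fin n => ρ)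
        = ∫ x : Fin n → α, ∑ i, ∑ i', g (x i) * g (x i') ∂(Measure.pi fun _ : Fin n => ρ) := by
          congr 1 with x
          exact hexp x
      _ = ∑ i : Fin n, ∑ i' : Fin n,
            ∫ x : Fin n → α, g (x i) * g (x i') ∂(Measure.pi fun _ : Fin n => ρ) := by
          rw [integral_finset_sum _ fun i _ => integrable_finset_sum _ fun i' _ => hint i i']
          exact Finset.sum_congr rfl fun i _ =>
            integral_finset_sum _ fun i' _ => hint i i'
      _ = ∑ i : Fin n, ∑ i' : Fin n, if i = i' then ∫ a, g a ^ 2 ∂ρ else 0 :=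
          Finset.sum_congr rfl fun i _ => Finset.sum_congr rfl fun i' _ => hval i i'
      _ = n * ∫ a, g a ^ 2 ∂ρ := by
          simp [Finset.sum_ite_eq, Finset.mem_univ]
end AuxGauss

/-- Accuracy of the Gaussian protocol without projection. The data
`v₁, …, v_n` are i.i.d. from `p` and the noises `z₁, …, z_n` are i.i.d. `d`-dimensional
Gaussians with independent `N(0, σ²)` coordinates, independent of the data; this is modeled
by the product measure on `(Fin n → Fin J) × (Fin n → Fin d → ℝ)`. With
`ȳ = (1/n) ∑ᵢ (a_{vᵢ} + zᵢ)`, the expected Euclidean error `E ‖ȳ - A p‖₂` is at most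
`r √(2 d ln(2/δ)/(n ε²)) + r/√n`. -/
theorem gaussian_protocol_accuracy_no_projection
    (d J n : ℕ) (hd : 1 ≤ d) (hJ : 1 ≤ J) (hn : 1 ≤ n)
    (r ε δ : ℝ) (hr : 0 < r) (hε : 0 < ε) (hδ0 : 0 < δ) (hδ1 : δ < 1)
    (A : Fin d → Fin J → ℝ)
    (hA : ∀ j, Real.sqrt (∑ k, (A k j) ^ 2) ≤ r)
    (p : Fin J → ℝ) (hp0 : ∀ j, 0 ≤ p j) (hp1 : ∑ j, p j = 1)
    (σ2 : ℝ≥0) (hσ2 : (σ2 : ℝ) = 2 * r ^ 2 * Real.log (2 / δ) / ε ^ 2) :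
    ∫ ω : (Fin n → Fin J) × (Fin n → Fin d → ℝ),
        Real.sqrt (∑ k, ((n : ℝ)⁻¹ * (∑ i, (A k (ω.1 i) + ω.2 i k))
            - ∑ j, A k j * p j) ^ 2)
      ∂((Measure.pi fun _ : Fin n => discMeasure p).prod
          (Measure.pi fun _ : Fin n => Measure.pi fun _ : Fin d => gaussianReal 0 σ2))
      ≤ r * Real.sqrt (2 * d * Real.log (2 / δ) / (n * ε ^ 2)) + r / Real.sqrt n := by
  classical
  have hn0 : (0:ℝ) < n := by exact_mod_cast hn
  have hlog : 0 < Real.log (2 / δ) := Real.log_pos (by rw [lt_div_iff₀ hδ0]; linarith)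
  have hσpos : (0:ℝ) < (σ2 : ℝ) := by rw [hσ2]; positivity
  have hσ : σ2 ≠ 0 := by
    intro h; rw [h] at hσpos; simp at hσpos
  -- measures
  set μ : Measure (Fin J) := discMeasure p with hμdef
  set ν : Measure (Fin d → ℝ) := Measure.pi fun _ : Fin d => gaussianReal 0 σ2 with hνdef
  haveI : IsProbabilityMeasure μ := by
    constructor
    rw [hμdef, discMeasure]
    rw [Measure.finset_sum_apply]
    simp only [Measure.smul_apply, Measure.dirac_apply' _ MeasurableSet.univ,
      Set.mem_univ, Set.indicator_of_mem, Pi.one_apply, smul_eq_mul, mul_one]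
    rw [← ENNReal.ofReal_sum_of_nonneg (fun j _ => hp0 j), hp1, ENNReal.ofReal_one]
  set ρ : Measure (Fin J × (Fin d → ℝ)) := μ.prod ν with hρdef
  haveI : IsProbabilityMeasure ρ := by rw [hρdef]; infer_instance
  -- discrete integral formula
  have hdisc : ∀ f : Fin J → ℝ, ∫ j, f j ∂μ = ∑ j, p j * f j := by
    intro f
    rw [hμdef, discMeasure, integral_finset_sum_measure (fun j _ =>
      (Integrable.of_finite (μ := Measure.dirac j) (f := f)).smul_measure
        ENNReal.ofReal_ne_top)]
    refine Finset.sum_congr rfl fun j _ => ?_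
    rw [integral_smul_measure, integral_dirac, ENNReal.toReal_ofReal (hp0 j), smul_eq_mul]
  have hμint : ∀ f : Fin J → ℝ, Integrable f μ := fun f => Integrable.of_finite
  -- gaussian coordinate facts
  have hνint1 : ∀ k : Fin d, Integrable (fun z : Fin d → ℝ => z k) ν :=
    fun k => integrable_pi_eval _ k (fun x : ℝ => x) (gauss_integrable_id hσ)
  have hνint2 : ∀ k : Fin d, Integrable (fun z : Fin d → ℝ => (z k) ^ 2) ν :=
    fun k => integrable_pi_eval _ k (fun x : ℝ => x ^ 2) (gauss_integrable_sq hσ)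
  have hνval1 : ∀ k : Fin d, ∫ z, z k ∂ν = 0 := fun k => by
    rw [hνdef, integral_pi_eval _ k (fun x : ℝ => x), gauss_integral_id hσ]
  have hνval2 : ∀ k : Fin d, ∫ z, (z k) ^ 2 ∂ν = (σ2 : ℝ) := fun k => by
    rw [hνdef, integral_pi_eval _ k (fun x : ℝ => x ^ 2), gauss_integral_sq hσ]
  -- the centered per-person functions
  set m : Fin d → ℝ := fun k => ∑ j, A k j * p j with hmdef
  set g : Fin d → (Fin J × (Fin d → ℝ)) → ℝ :=
    fun k y => (A k y.1 - m k) + y.2 k with hgdef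
  have hg_int : ∀ k, Integrable (g k) ρ := by
    intro k
    have h1 : Integrable (fun y : Fin J × (Fin d → ℝ) => (A k y.1 - m k) * 1) ρ :=
      (hμint fun j => A k j - m k).mul_prod (integrable_const 1)
    have h2 : Integrable (fun y : Fin J × (Fin d → ℝ) => (1:ℝ) * y.2 k) ρ :=
      (integrable_const 1).mul_prod (hνint1 k)
    exact ((h1.add h2).congr (Filter.Eventually.of_forall fun y => by simp [hgdef]))
  have hg_mean : ∀ k, ∫ y, g k y ∂ρ = 0 := by
    intro k
    have h1 : Integrable (fun y : Fin J × (Fin d → ℝ) => (A k y.1 - m k) * 1) ρ :=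
      (hμint fun j => A k j - m k).mul_prod (integrable_const 1)
    have h2 : Integrable (fun y : Fin J × (Fin d → ℝ) => (1:ℝ) * y.2 k) ρ :=
      (integrable_const 1).mul_prod (hνint1 k)
    have hstep : ∫ y, g k y ∂ρ
        = (∫ y, (A k y.1 - m k) * 1 ∂ρ) + ∫ y, (1:ℝ) * y.2 k ∂ρ := by
      rw [← integral_add h1 h2]
      congr 1 with y
      simp [hgdef]
    rw [hstep, hρdef, integral_prod_mul (fun j : Fin J => A k j - m k) (fun _ => (1:ℝ)),
      integral_prod_mul (fun _ : Fin J => (1:ℝ)) (fun z : Fin d → ℝ => z k)]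
    have hμ0 : ∫ j, (A k j - m k) ∂μ = 0 := by
      rw [hdisc]
      simp only [mul_sub]
      rw [Finset.sum_sub_distrib, ← Finset.sum_mul, hp1]
      have hmm : ∑ j, p j * A k j = m k := by
        rw [hmdef]; exact Finset.sum_congr rfl fun j _ => mul_comm _ _
      rw [hmm]; ring
    rw [hμ0, hνval1 k]
    simp
  have hg2_val : ∀ k, ∫ y, (g k y) ^ 2 ∂ρ
      = (∑ j, p j * (A k j - m k) ^ 2) + (σ2 : ℝ) := by
    intro k
    have h1 : Integrable (fun y : Fin J × (Fin d → ℝ) => (A k y.1 - m k) ^ 2 * 1) ρ :=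
      (hμint fun j => (A k j - m k) ^ 2).mul_prod (integrable_const 1)
    have h2 : Integrable (fun y : Fin J × (Fin d → ℝ) => (2 * (A k y.1 - m k)) * y.2 k) ρ :=
      (hμint fun j => 2 * (A k j - m k)).mul_prod (hνint1 k)
    have h3 : Integrable (fun y : Fin J × (Fin d → ℝ) => (1:ℝ) * (y.2 k) ^ 2) ρ :=
      (integrable_const 1).mul_prod (hνint2 k)
    have e : ∀ y : Fin J × (Fin d → ℝ), (g k y) ^ 2
        = (A k y.1 - m k) ^ 2 * 1 + ((2 * (A k y.1 - m k)) * y.2 k + (1:ℝ) * (y.2 k) ^ 2) :=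
      fun y => by simp only [hgdef]; ring
    have hsplit : ∫ y, (g k y) ^ 2 ∂ρ
        = (∫ y, (A k y.1 - m k) ^ 2 * 1 ∂ρ) + ((∫ y, (2 * (A k y.1 - m k)) * y.2 k ∂ρ)
          + ∫ y, (1:ℝ) * (y.2 k) ^ 2 ∂ρ) := by
      have h23 : Integrable (fun y : Fin J × (Fin d → ℝ) =>
          (2 * (A k y.1 - m k)) * y.2 k + (1:ℝ) * (y.2 k) ^ 2) ρ :=
        (h2.add h3).congr (Filter.Eventually.of_forall fun y => rfl)
      rw [integral_congr_ae (Filter.Eventually.of_forall e), integral_add h1 h23,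
        integral_add h2 h3]
    rw [hsplit, hρdef,
      integral_prod_mul (fun j : Fin J => (A k j - m k) ^ 2) (fun _ => (1:ℝ)),
      integral_prod_mul (fun j : Fin J => 2 * (A k j - m k)) (fun z : Fin d → ℝ => z k),
      integral_prod_mul (fun _ : Fin J => (1:ℝ)) (fun z : Fin d → ℝ => (z k) ^ 2)]
    rw [hνval1 k, hνval2 k, hdisc]
    simp
  have hg2_int : ∀ k, Integrable (fun y => (g k y) ^ 2) ρ := by
    intro k
    have h1 : Integrable (fun y : Fin J × (Fin d → ℝ) => (A k y.1 - m k) ^ 2 * 1) ρ :=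
      (hμint fun j => (A k j - m k) ^ 2).mul_prod (integrable_const 1)
    have h2 : Integrable (fun y : Fin J × (Fin d → ℝ) => (2 * (A k y.1 - m k)) * y.2 k) ρ :=
      (hμint fun j => 2 * (A k j - m k)).mul_prod (hνint1 k)
    have h3 : Integrable (fun y : Fin J × (Fin d → ℝ) => (1:ℝ) * (y.2 k) ^ 2) ρ :=
      (integrable_const 1).mul_prod (hνint2 k)
    exact ((h1.add (h2.add h3)).congr (Filter.Eventually.of_forall fun y => by
      simp only [Pi.add_apply, hgdef]; ring))
  -- variance bound
  have hvar : ∑ k, ∫ y, (g k y) ^ 2 ∂ρ ≤ r ^ 2 + d * (σ2 : ℝ) := by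
    have hvarid : ∀ k, ∑ j, p j * (A k j - m k) ^ 2
        = (∑ j, p j * (A k j) ^ 2) - (m k) ^ 2 := by
      intro k
      have h1 : ∑ j, p j * A k j = m k := by
        rw [hmdef]; exact Finset.sum_congr rfl fun j _ => mul_comm _ _
      calc ∑ j, p j * (A k j - m k) ^ 2
          = ∑ j, (p j * (A k j) ^ 2 - 2 * m k * (p j * A k j) + (m k) ^ 2 * p j) :=
            Finset.sum_congr rfl fun j _ => by ring
        _ = (∑ j, p j * (A k j) ^ 2) - 2 * m k * (∑ j, p j * A k j)
              + (m k) ^ 2 * (∑ j, p j) := by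
            rw [Finset.sum_add_distrib, Finset.sum_sub_distrib, ← Finset.mul_sum,
              ← Finset.mul_sum]
        _ = (∑ j, p j * (A k j) ^ 2) - (m k) ^ 2 := by rw [h1, hp1]; ring
    have hA' : ∀ j, ∑ k, (A k j) ^ 2 ≤ r ^ 2 := by
      intro j
      have hS : (0:ℝ) ≤ ∑ k, (A k j) ^ 2 := Finset.sum_nonneg fun k _ => sq_nonneg _
      calc ∑ k, (A k j) ^ 2 = (Real.sqrt (∑ k, (A k j) ^ 2)) ^ 2 := (Real.sq_sqrt hS).symm
        _ ≤ r ^ 2 := pow_le_pow_left₀ (Real.sqrt_nonneg _) (hA j) 2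
    have hmain : ∑ k, ∑ j, p j * (A k j - m k) ^ 2 ≤ r ^ 2 := by
      calc ∑ k, ∑ j, p j * (A k j - m k) ^ 2
          = ∑ k, ((∑ j, p j * (A k j) ^ 2) - (m k) ^ 2) :=
            Finset.sum_congr rfl fun k _ => hvarid k
        _ ≤ ∑ k, ∑ j, p j * (A k j) ^ 2 :=
            Finset.sum_le_sum fun k _ => sub_le_self _ (sq_nonneg _)
        _ = ∑ j, ∑ k, p j * (A k j) ^ 2 := Finset.sum_comm
        _ = ∑ j, p j * ∑ k, (A k j) ^ 2 :=
            Finset.sum_congr rfl fun j _ => (Finset.mul_sum _ _ _).symm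
        _ ≤ ∑ j, p j * r ^ 2 :=
            Finset.sum_le_sum fun j _ => mul_le_mul_of_nonneg_left (hA' j) (hp0 j)
        _ = r ^ 2 := by rw [← Finset.sum_mul, hp1, one_mul]
    have hsum : ∑ k, ∫ y, (g k y) ^ 2 ∂ρ
        = (∑ k, ∑ j, p j * (A k j - m k) ^ 2) + d * (σ2 : ℝ) := by
      rw [Finset.sum_congr rfl fun k _ => hg2_val k, Finset.sum_add_distrib,
        Finset.sum_const, Finset.card_univ, Fintype.card_fin, nsmul_eq_mul]
    rw [hsum]
    linarith
  -- core iid computation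
  have hcore := fun k => core_sum_sq ρ n (g k) (hg_int k) (hg2_int k) (hg_mean k)
  -- transport to the iid product space
  have hT := measurePreserving_arrowProdEquivProdArrow (Fin J) (Fin d → ℝ) (Fin n)
    (fun _ => μ) (fun _ => ν)
  rw [← hT.integral_comp']
  beta_reduce
  set PP : Measure (Fin n → Fin J × (Fin d → ℝ)) := Measure.pi fun _ : Fin n => ρ with hPPdef
  set G : (Fin n → Fin J × (Fin d → ℝ)) → ℝ :=
    fun x => ∑ k, ((n:ℝ)⁻¹ * ∑ i, g k (x i)) ^ 2 with hGdef
  have hptwise : ∀ x : Fin n → Fin J × (Fin d → ℝ),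
      Real.sqrt (∑ k, ((n : ℝ)⁻¹ * (∑ i,
          (A k (((MeasurableEquiv.arrowProdEquivProdArrow (Fin J) (Fin d → ℝ) (Fin n)) x).1 i)
          + ((MeasurableEquiv.arrowProdEquivProdArrow (Fin J) (Fin d → ℝ) (Fin n)) x).2 i k))
          - ∑ j, A k j * p j) ^ 2) = Real.sqrt (G x) := by
    intro x
    congr 1
    refine Finset.sum_congr rfl fun k _ => ?_
    have he1 : ∀ i : Fin n,
        (A k (((MeasurableEquiv.arrowProdEquivProdArrow (Fin J) (Fin d → ℝ) (Fin n)) x).1 i)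
          + ((MeasurableEquiv.arrowProdEquivProdArrow (Fin J) (Fin d → ℝ) (Fin n)) x).2 i k)
        = A k ((x i).1) + (x i).2 k := fun i => rfl
    simp only [he1]
    have hsumg : ∑ i, g k (x i)
        = (∑ i, (A k ((x i).1) + (x i).2 k)) - n * m k := by
      have : ∀ i : Fin n, g k (x i) = (A k ((x i).1) + (x i).2 k) - m k := by
        intro i; simp [hgdef]; ring
      rw [Finset.sum_congr rfl fun i _ => this i, Finset.sum_sub_distrib,
        Finset.sum_const, Finset.card_univ, Fintype.card_fin, nsmul_eq_mul]
    have hmk : ∑ j, A k j * p j = m k := by rw [hmdef]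
    rw [hmk, hsumg]
    field_simp
  rw [integral_congr_ae (Filter.Eventually.of_forall hptwise)]
  -- integrability and value of G
  have hterm_int : ∀ k : Fin d,
      Integrable (fun x : Fin n → Fin J × (Fin d → ℝ) =>
        ((n:ℝ)⁻¹ * ∑ i, g k (x i)) ^ 2) PP := by
    intro k
    refine ((hcore k).1.const_mul (((n:ℝ)⁻¹) ^ 2)).congr
      (Filter.Eventually.of_forall fun x => ?_)
    simp [mul_pow]
  have hGint : Integrable G PP := integrable_finset_sum _ fun k _ => hterm_int k
  have hGnonneg : ∀ x, 0 ≤ G x := fun x => Finset.sum_nonneg fun k _ => sq_nonneg _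
  have hGval : ∫ x, G x ∂PP ≤ (d * (σ2:ℝ) / n) + r ^ 2 / n := by
    have h1 : ∫ x, G x ∂PP = ∑ k, ∫ x, ((n:ℝ)⁻¹ * ∑ i, g k (x i)) ^ 2 ∂PP := by
      rw [hGdef, integral_finset_sum _ fun k _ => hterm_int k]
    have h2 : ∀ k, ∫ x, ((n:ℝ)⁻¹ * ∑ i, g k (x i)) ^ 2 ∂PP
        = (n:ℝ)⁻¹ * ∫ y, (g k y) ^ 2 ∂ρ := by
      intro k
      have e1 : ∫ x, ((n:ℝ)⁻¹ * ∑ i, g k (x i)) ^ 2 ∂PP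
          = ((n:ℝ)⁻¹) ^ 2 * ∫ x, (∑ i, g k (x i)) ^ 2 ∂PP := by
        rw [← integral_const_mul]
        congr 1 with x
        rw [mul_pow]
      rw [e1, hPPdef, (hcore k).2]
      field_simp
    rw [h1, Finset.sum_congr rfl fun k _ => h2 k, ← Finset.mul_sum]
    calc (n:ℝ)⁻¹ * ∑ k, ∫ y, (g k y) ^ 2 ∂ρ
        ≤ (n:ℝ)⁻¹ * (r ^ 2 + d * (σ2:ℝ)) :=
          mul_le_mul_of_nonneg_left hvar (by positivity)
      _ = (d * (σ2:ℝ) / n) + r ^ 2 / n := by field_simp; ring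
  -- measurability
  have hgmeas : ∀ k, Measurable (g k) := by
    intro k
    apply Measurable.add
    · exact ((measurable_of_countable (fun j : Fin J => A k j - m k)).comp measurable_fst)
    · exact (measurable_pi_apply k).comp measurable_snd
  have hGmeas : Measurable G := by
    apply Finset.measurable_sum
    intro k _
    apply Measurable.pow_const
    apply Measurable.const_mul
    apply Finset.measurable_sum
    intro i _
    exact (hgmeas k).comp (measurable_pi_apply i)
  -- Jensen / Cauchy-Schwarz
  have hsqrt2 : MemLp (fun x => Real.sqrt (G x)) 2 PP := by
    refine (memLp_two_iff_integrable_sq hGmeas.sqrt.aestronglyMeasurable).mpr ?_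
    exact hGint.congr (Filter.Eventually.of_forall fun x =>
      (Real.sq_sqrt (hGnonneg x)).symm)
  have h22 : Real.HolderConjugate 2 2 := Real.HolderConjugate.two_two
  have hHold := integral_mul_le_Lp_mul_Lq_of_nonneg (μ := PP) h22
    (f := fun x => Real.sqrt (G x)) (g := fun _ => (1:ℝ))
    (Filter.Eventually.of_forall fun x => Real.sqrt_nonneg _)
    (Filter.Eventually.of_forall fun _ => zero_le_one)
    (by rw [ENNReal.ofReal_ofNat]; exact hsqrt2)
    (by rw [ENNReal.ofReal_ofNat]; exact memLp_const 1)
  have hInn : (0:ℝ) ≤ ∫ x, G x ∂PP := integral_nonneg hGnonneg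
  have hjensen : ∫ x, Real.sqrt (G x) ∂PP ≤ Real.sqrt (∫ x, G x ∂PP) := by
    have e2 : ∫ x, Real.sqrt (G x) * 1 ∂PP = ∫ x, Real.sqrt (G x) ∂PP := by simp
    have e4 : ∫ x, (Real.sqrt (G x)) ^ (2:ℝ) ∂PP = ∫ x, G x ∂PP := by
      congr 1 with x
      rw [rpow_two' _ (Real.sqrt_nonneg _), Real.sq_sqrt (hGnonneg x)]
    have e3 : ∫ _x : Fin n → Fin J × (Fin d → ℝ), ((1:ℝ)) ^ (2:ℝ) ∂PP = 1 := by
      simp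
    rw [e2, e4, e3, Real.one_rpow, mul_one] at hHold
    rw [Real.sqrt_eq_rpow]
    exact hHold
  -- final numeric computation
  have hsqrt_add : ∀ a b : ℝ, 0 ≤ a → 0 ≤ b →
      Real.sqrt (a + b) ≤ Real.sqrt a + Real.sqrt b := by
    intro a b ha hb
    have h : a + b ≤ (Real.sqrt a + Real.sqrt b) ^ 2 := by
      nlinarith [Real.sq_sqrt ha, Real.sq_sqrt hb,
        mul_nonneg (Real.sqrt_nonneg a) (Real.sqrt_nonneg b)]
    calc Real.sqrt (a + b) ≤ Real.sqrt ((Real.sqrt a + Real.sqrt b) ^ 2) :=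
          Real.sqrt_le_sqrt h
      _ = Real.sqrt a + Real.sqrt b := Real.sqrt_sq (by positivity)
  have eqA : Real.sqrt (d * (σ2:ℝ) / n)
      = r * Real.sqrt (2 * d * Real.log (2 / δ) / (n * ε ^ 2)) := by
    have h : d * (σ2:ℝ) / n = r ^ 2 * (2 * d * Real.log (2 / δ) / (n * ε ^ 2)) := by
      rw [hσ2]; field_simp
    rw [h, Real.sqrt_mul (sq_nonneg r), Real.sqrt_sq hr.le]
  have eqB : Real.sqrt (r ^ 2 / n) = r / Real.sqrt n := by
    rw [Real.sqrt_div (sq_nonneg r), Real.sqrt_sq hr.le]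
  calc ∫ x, Real.sqrt (G x) ∂PP ≤ Real.sqrt (∫ x, G x ∂PP) := hjensen
    _ ≤ Real.sqrt ((d * (σ2:ℝ) / n) + r ^ 2 / n) := Real.sqrt_le_sqrt hGval
    _ ≤ Real.sqrt (d * (σ2:ℝ) / n) + Real.sqrt (r ^ 2 / n) :=
        hsqrt_add _ _ (by positivity) (by positivity)
    _ = r * Real.sqrt (2 * d * Real.log (2 / δ) / (n * ε ^ 2)) + r / Real.sqrt n := by
        rw [eqA, eqB]
end

section
/- Privacy of rejection sampling (Theorem 3.3, stated abstractly with the hypotheses its proof uses). Let ε ∈ (0,1] and 0 ≤ δ ≤ ε/32. Let μ₀ be a probability measure on a measurable space Y, and for each input v in a set V let ν_v be a probability measure on Y absolutely continuous with respect to μ₀, with density ρ_v = dν_v/dμ₀. Define Good_v = {y ∈ Y : e^{−ε/4} ≤ ρ_v(y) ≤ e^{ε/4}}, and assume μ₀(Y \ Good_v) ≤ δ for every v ∈ V. For input v, the randomizer samples Y ~ μ₀ and outputs a bit B ∈ {0,1} with P(B = 1 | Y = y) = ρ_v(y)/2 if y ∈ Good_v and P(B = 1 | Y = y) = 0 otherwise.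 Then for all v, v' ∈ V and every b ∈ {0,1}, P_v(B = b) ≤ e^ε · P_{v'}(B = b); i.e., the bit B satisfies ε-local differential privacy. -/
open MeasureTheory ProbabilityTheory
open scoped NNReal ENNReal

/-- Privacy of rejection sampling, stated abstractly. For each input `v`,
`ρ v` is the density of the target measure `ν_v` with respect to the base probability
measure `μ₀`, `Good v` is the set where the density lies in `[e^{-ε/4}, e^{ε/4}]`, and the
probability that the output bit `B` equals `1` is `acc v = ∫_{Good v} ρ v y / 2 dμ₀(y)`
(the probability of `B = 0` being `1 - acc v`). If `μ₀((Good v)ᶜ) ≤ δ` for all `v`, with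
`0 < ε ≤ 1` and `0 ≤ δ ≤ ε/32`, then `P_v(B = b) ≤ e^ε P_{v'}(B = b)` for `b ∈ {0, 1}`. -/
theorem rejection_sampling_privacy
    {Y : Type*} [MeasurableSpace Y] {V : Type*}
    (ε δ : ℝ) (hε : 0 < ε) (hε1 : ε ≤ 1) (hδ0 : 0 ≤ δ) (hδ : δ ≤ ε / 32)
    (μ0 : Measure Y) [IsProbabilityMeasure μ0]
    (ρ : V → Y → ℝ) (hρmeas : ∀ v, Measurable (ρ v)) (hρ0 : ∀ v y, 0 ≤ ρ v y)
    (hρ1 : ∀ v, ∫ y, ρ v y ∂μ0 = 1)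
    (Good : V → Set Y)
    (hGood : ∀ v, Good v = {y | Real.exp (-ε / 4) ≤ ρ v y ∧ ρ v y ≤ Real.exp (ε / 4)})
    (hbad : ∀ v, μ0 (Good v)ᶜ ≤ ENNReal.ofReal δ)
    (acc : V → ℝ) (hacc : ∀ v, acc v = ∫ y in Good v, ρ v y / 2 ∂μ0)
    (v v' : V) :
    acc v ≤ Real.exp ε * acc v' ∧ 1 - acc v ≤ Real.exp ε * (1 - acc v') := by
  set t := Real.exp (ε / 4) with ht_def
  have htpos : 0 < t := Real.exp_pos _
  have ht1 : 1 + ε / 4 ≤ t := by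
    have := Real.add_one_le_exp (ε / 4); linarith
  have hge1 : 1 ≤ t := by linarith
  have ht13 : t ≤ 1.3 := by
    have h4 : t ^ (4 : ℕ) = Real.exp ε := by
      rw [ht_def, ← Real.exp_nat_mul]; congr 1; push_cast; ring
    have he : Real.exp ε ≤ Real.exp 1 := Real.exp_le_exp.2 hε1
    have he1 : Real.exp 1 < 2.7182818286 := Real.exp_one_lt_d9
    have : t ^ (4 : ℕ) ≤ (1.3 : ℝ) ^ (4 : ℕ) := by rw [h4]; norm_num; linarith
    exact le_of_pow_le_pow_left₀ (by norm_num) (by norm_num) this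
  have hδt : δ ≤ (t - 1) / 8 := by linarith
  have hsneg : Real.exp (-ε / 4) = t⁻¹ := by
    rw [ht_def, ← Real.exp_neg]; ring_nf
  have hexpε : Real.exp ε = t ^ 4 := by
    rw [ht_def, ← Real.exp_nat_mul]; congr 1; push_cast; ring
  -- measurability of Good
  have hmg : ∀ w, MeasurableSet (Good w) := by
    intro w
    rw [hGood]
    exact (measurableSet_le measurable_const (hρmeas w)).inter
      (measurableSet_le (hρmeas w) measurable_const)
  -- bounds on μ0 (Good w)
  have hm_le : ∀ w, (μ0 (Good w)).toReal ≤ 1 := fun w => by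
    have := prob_le_one (μ := μ0) (s := Good w)
    simpa using ENNReal.toReal_mono ENNReal.one_ne_top this
  have hm_ge : ∀ w, 1 - δ ≤ (μ0 (Good w)).toReal := by
    intro w
    have hc : μ0 (Good w)ᶜ = 1 - μ0 (Good w) := by
      rw [measure_compl (hmg w) (measure_ne_top μ0 _), measure_univ]
    have h1 : (1 : ℝ≥0∞) ≤ ENNReal.ofReal δ + μ0 (Good w) := by
      have hb := hbad w
      rw [hc] at hb
      exact tsub_le_iff_right.mp hb
    have hfin : ENNReal.ofReal δ + μ0 (Good w) ≠ ⊤ :=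
      ENNReal.add_ne_top.2 ⟨ENNReal.ofReal_ne_top, measure_ne_top μ0 _⟩
    have := ENNReal.toReal_mono hfin h1
    rw [ENNReal.toReal_add ENNReal.ofReal_ne_top (measure_ne_top μ0 _),
      ENNReal.toReal_ofReal hδ0] at this
    simp at this
    linarith
  -- integrability
  have hint : ∀ w, IntegrableOn (fun y => ρ w y / 2) (Good w) μ0 := by
    intro w
    have hi : Integrable (ρ w) μ0 := by
      by_contra h
      have h1 := hρ1 w
      rw [integral_undef h] at h1
      exact one_ne_zero h1.symm
    exact (hi.div_const 2).integrableOn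
  -- upper bound on acc
  have hupper : ∀ w, acc w ≤ t / 2 := by
    intro w
    rw [hacc]
    have hle : ∫ y in Good w, ρ w y / 2 ∂μ0 ≤ ∫ _y in Good w, t / 2 ∂μ0 := by
      apply setIntegral_mono_on (hint w)
        (integrableOn_const (measure_ne_top μ0 _)) (hmg w)
      intro y hy
      rw [hGood] at hy
      have := hy.2
      linarith
    rw [setIntegral_const, smul_eq_mul, measureReal_def] at hle
    have h0 : 0 ≤ t / 2 := by linarith
    have h2 : (μ0 (Good w)).toReal * (t / 2) ≤ 1 * (t / 2) :=
      mul_le_mul_of_nonneg_right (hm_le w) h0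
    linarith
  -- lower bound on acc
  have hlower : ∀ w, (1 - δ) * (t⁻¹ / 2) ≤ acc w := by
    intro w
    rw [hacc]
    have hle : ∫ _y in Good w, t⁻¹ / 2 ∂μ0 ≤ ∫ y in Good w, ρ w y / 2 ∂μ0 := by
      apply setIntegral_mono_on
        (integrableOn_const (measure_ne_top μ0 _)) (hint w) (hmg w)
      intro y hy
      rw [hGood] at hy
      have := hy.1
      rw [hsneg] at this
      linarith
    rw [setIntegral_const, smul_eq_mul, measureReal_def] at hle
    have h0 : 0 ≤ t⁻¹ / 2 := by positivity
    have h2 : (1 - δ) * (t⁻¹ / 2) ≤ (μ0 (Good w)).toReal * (t⁻¹ / 2) :=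
      mul_le_mul_of_nonneg_right (hm_ge w) h0
    linarith
  -- final real arithmetic
  rw [hexpε]
  have hL := hlower v'
  have hU := hupper v
  have hL' := hlower v
  have hU' := hupper v'
  have htne : t ≠ 0 := ne_of_gt htpos
  constructor
  · calc acc v ≤ t / 2 := hU
      _ ≤ t ^ 4 * ((1 - δ) * (t⁻¹ / 2)) := by
          have heq : t ^ 4 * ((1 - δ) * (t⁻¹ / 2)) = t ^ 3 * (1 - δ) / 2 := by
            field_simp
          rw [heq]
          have hq : 1 ≤ t ^ 2 * (1 - δ) := by
            nlinarith [mul_nonneg (sub_nonneg.2 hge1) (sub_nonneg.2 ht13), sq_nonneg (t-1),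
              sq_nonneg t, mul_nonneg (sub_nonneg.2 hge1) (sub_nonneg.2 hge1)]
          nlinarith [mul_le_mul_of_nonneg_left hq htpos.le]
      _ ≤ t ^ 4 * acc v' := mul_le_mul_of_nonneg_left hL (by positivity)
  · calc 1 - acc v ≤ 1 - (1 - δ) * (t⁻¹ / 2) := by linarith
      _ ≤ t ^ 4 * (1 - t / 2) := by
          have key2 : 2*t - (1-δ) ≤ 2*t^5 - t^6 := by
            nlinarith [mul_nonneg (sub_nonneg.2 hge1) (sub_nonneg.2 ht13), sq_nonneg (t-1),
              sq_nonneg t,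
              mul_nonneg (mul_nonneg (sub_nonneg.2 hge1) (sub_nonneg.2 hge1)) (sub_nonneg.2 ht13),
              mul_nonneg (mul_nonneg (sub_nonneg.2 hge1) (sub_nonneg.2 ht13)) (sq_nonneg t),
              mul_nonneg (mul_nonneg (sub_nonneg.2 hge1) (sub_nonneg.2 ht13)) (sq_nonneg (t-1)),
              mul_nonneg (mul_nonneg (sub_nonneg.2 hge1) (sub_nonneg.2 hge1)) (sq_nonneg t)]
          have e2 : 1 - (1 - δ) * (t⁻¹ / 2) = (2 * t - (1 - δ)) / (2 * t) := by
            field_simp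
          have e3 : t ^ 4 * (1 - t / 2) = (2 * t ^ 5 - t ^ 6) / (2 * t) := by
            field_simp
          rw [e2, e3]
          gcongr
      _ ≤ t ^ 4 * (1 - acc v') := mul_le_mul_of_nonneg_left (by linarith) (by positivity)
end

section
/- Projection onto the probability simplex (key geometric step in the proof of Theorem 4.2). Let J ≥ 1, let p ∈ Simplex(J), let p̄ ∈ ℝ^J be arbitrary, and let p̂ be any minimizer of ‖w − p̄‖₂ over w ∈ Simplex(J). Then ‖p̂ − p‖₂² ≤ 4 · max_{j ∈ [J]} |p̄_j − p_j|. -/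
/-- projection onto the probability simplex. If `p` lies in the simplex
and `p̂` is any minimizer over the simplex of the Euclidean distance to an arbitrary
`p̄ ∈ ℝ^J`, then `‖p̂ - p‖₂² ≤ 4 maxⱼ |p̄ⱼ - pⱼ|`. -/
theorem simplex_projection
    (J : ℕ) (hJ : 1 ≤ J)
    (p pbar phat : Fin J → ℝ)
    (hp0 : ∀ j, 0 ≤ p j) (hp1 : ∑ j, p j = 1)
    (hphat0 : ∀ j, 0 ≤ phat j) (hphat1 : ∑ j, phat j = 1)
    (hphatMin : ∀ w : Fin J → ℝ, (∀ j, 0 ≤ w j) → (∑ j, w j = 1) →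
        (∑ j, (phat j - pbar j) ^ 2) ≤ ∑ j, (w j - pbar j) ^ 2) :
    ∑ j, (phat j - p j) ^ 2
      ≤ 4 * Finset.univ.sup' ⟨⟨0, hJ⟩, Finset.mem_univ _⟩ (fun j => |pbar j - p j|) := by
  set M := Finset.univ.sup' ⟨⟨0, hJ⟩, Finset.mem_univ _⟩ (fun j => |pbar j - p j|) with hM
  have hMle : ∀ j, |pbar j - p j| ≤ M := fun j =>
    Finset.le_sup' (fun j => |pbar j - p j|) (Finset.mem_univ j)
  have h1 := hphatMin p hp0 hp1
  -- expand square
  have e : ∑ j, (phat j - p j) ^ 2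
      = (∑ j, (phat j - pbar j) ^ 2 - ∑ j, (p j - pbar j) ^ 2)
        + 2 * ∑ j, (pbar j - p j) * (phat j - p j) := by
    rw [Finset.mul_sum, ← Finset.sum_sub_distrib, ← Finset.sum_add_distrib]
    exact Finset.sum_congr rfl fun j _ => by ring
  have h2 : ∑ j, (pbar j - p j) * (phat j - p j) ≤ ∑ j, M * (phat j + p j) := by
    apply Finset.sum_le_sum
    intro j _
    calc (pbar j - p j) * (phat j - p j) ≤ |(pbar j - p j) * (phat j - p j)| := le_abs_self _
      _ = |pbar j - p j| * |phat j - p j| := abs_mul _ _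
      _ ≤ M * (phat j + p j) := by
          apply mul_le_mul (hMle j) _ (abs_nonneg _) ((abs_nonneg _).trans (hMle j))
          have h3 : |phat j - p j| ≤ |phat j| + |p j| := abs_sub _ _
          rwa [abs_of_nonneg (hphat0 j), abs_of_nonneg (hp0 j)] at h3
  have h4 : ∑ j, M * (phat j + p j) = 2 * M := by
    rw [← Finset.mul_sum, Finset.sum_add_distrib, hphat1, hp1]; ring
  rw [e]
  rw [h4] at h2
  linarith
end

section
/- Accuracy of the projected estimator under coordinatewise subGaussian noise (Theorem 4.2, high-dimensional case, conditional on the subGaussian property of the Hadamard-Response estimate). Let J ≥ 2, n ≥ 1, c > 0. Let p ∈ Simplex(J) and let p̄ be a random vector in ℝ^J such that E[p̄] = p and each coordinate X_j = p̄_j − p_j satisfies the moment-generating-function bound E[e^{t X_j}] ≤ exp( t² · 4c² / (2n) ) for all t ∈ ℝ. Let p̂ be any minimizer of ‖w − p̄‖₂ over w ∈ Simplex(J). Then E‖p̂ − p‖₂² ≤ √( 256 c² ln(J) / n ). -/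
open MeasureTheory ProbabilityTheory

/-- Variational inequality for a minimizer over the simplex. -/
lemma proj_var {J : ℕ} (a b q : Fin J → ℝ)
    (ha0 : ∀ j, 0 ≤ a j) (ha1 : ∑ j, a j = 1)
    (hq0 : ∀ j, 0 ≤ q j) (hq1 : ∑ j, q j = 1)
    (hmin : ∀ w : Fin J → ℝ, (∀ j, 0 ≤ w j) → (∑ j, w j = 1) →
        (∑ j, (a j - b j) ^ 2) ≤ ∑ j, (w j - b j) ^ 2) :
    ∑ j, (a j - q j) ^ 2 ≤ ∑ j, (a j - q j) * (b j - q j) := by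
  set A : ℝ := ∑ j, (a j - b j) * (q j - a j) with hA
  set D : ℝ := ∑ j, (q j - a j) ^ 2 with hD
  have hD0 : 0 ≤ D := Finset.sum_nonneg fun j _ => sq_nonneg _
  have key : ∀ t : ℝ, 0 < t → t ≤ 1 → 0 ≤ 2 * A + t * D := by
    intro t ht ht1
    have hw0 : ∀ j, 0 ≤ a j + t * (q j - a j) := by
      intro j
      have := ha0 j; have := hq0 j
      nlinarith
    have hw1 : ∑ j, (a j + t * (q j - a j)) = 1 := by
      rw [Finset.sum_add_distrib, ha1, ← Finset.mul_sum, Finset.sum_sub_distrib, hq1, ha1]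
      ring
    have h := hmin _ hw0 hw1
    have hexp : ∑ j, (a j + t * (q j - a j) - b j) ^ 2
        = (∑ j, (a j - b j) ^ 2) + 2 * t * A + t ^ 2 * D := by
      rw [hA, hD, Finset.mul_sum, Finset.mul_sum, ← Finset.sum_add_distrib,
        ← Finset.sum_add_distrib]
      exact Finset.sum_congr rfl fun j _ => by ring
    rw [hexp] at h
    have h2 : 0 ≤ t * (2 * A + t * D) := by nlinarith
    exact nonneg_of_mul_nonneg_right h2 ht
  have hA0 : 0 ≤ A := by
    by_contra hA'
    push_neg at hA'
    set t : ℝ := min 1 ((-A) / (D + 1)) with htdef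
    have ht0 : 0 < t := lt_min one_pos (div_pos (by linarith) (by linarith))
    have ht1 : t ≤ 1 := min_le_left _ _
    have htD : t * (D + 1) ≤ -A := by
      have h1 : t ≤ (-A) / (D + 1) := min_le_right _ _
      have h2 : (0:ℝ) < D + 1 := by linarith
      calc t * (D + 1) ≤ ((-A) / (D + 1)) * (D + 1) :=
            mul_le_mul_of_nonneg_right h1 h2.le
        _ = -A := by field_simp
    have := key t ht0 ht1
    nlinarith
  have hterm : ∀ j : Fin J, (a j - q j) ^ 2 - (a j - q j) * (b j - q j)
      = -((a j - b j) * (q j - a j)) := fun j => by ring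
  have hsum : (∑ j, (a j - q j) ^ 2) - ∑ j, (a j - q j) * (b j - q j) = -A := by
    rw [← Finset.sum_sub_distrib, hA, ← Finset.sum_neg_distrib]
    exact Finset.sum_congr rfl fun j _ => hterm j
  linarith

/-- accuracy of the projected estimator under coordinatewise subGaussian
noise (Theorem 4.2, high-dimensional case). If `p̄` is an unbiased estimate of
`p ∈ Simplex(J)` whose coordinates `Xⱼ = p̄ⱼ - pⱼ` satisfy the MGF bound
`E e^{t Xⱼ} ≤ e^{t² (4c²)/(2n)}` for all `t`, and `p̂` is any minimizer over the simplex of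
the Euclidean distance to `p̄`, then `E ‖p̂ - p‖₂² ≤ √(256 c² ln J / n)`. -/
theorem projected_estimator_subgaussian
    {Ω : Type*} [MeasurableSpace Ω] (μ : Measure Ω) [IsProbabilityMeasure μ]
    (J n : ℕ) (hJ : 2 ≤ J) (hn : 1 ≤ n) (c : ℝ) (hc : 0 < c)
    (p : Fin J → ℝ) (hp0 : ∀ j, 0 ≤ p j) (hp1 : ∑ j, p j = 1)
    (pbar : Ω → Fin J → ℝ) (hpbarMeas : ∀ j, Measurable (fun ω => pbar ω j))
    (hMean : ∀ j, ∫ ω, pbar ω j ∂μ = p j)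
    (hInt : ∀ j (t : ℝ), Integrable (fun ω => Real.exp (t * (pbar ω j - p j))) μ)
    (hMGF : ∀ j (t : ℝ),
        ∫ ω, Real.exp (t * (pbar ω j - p j)) ∂μ
          ≤ Real.exp (t ^ 2 * (4 * c ^ 2) / (2 * n)))
    (phat : Ω → Fin J → ℝ) (hphatMeas : ∀ j, Measurable (fun ω => phat ω j))
    (hphat0 : ∀ ω j, 0 ≤ phat ω j) (hphat1 : ∀ ω, ∑ j, phat ω j = 1)
    (hphatMin : ∀ ω, ∀ w : Fin J → ℝ, (∀ j, 0 ≤ w j) → (∑ j, w j = 1) →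
        (∑ j, (phat ω j - pbar ω j) ^ 2) ≤ ∑ j, (w j - pbar ω j) ^ 2) :
    ∫ ω, (∑ j, (phat ω j - p j) ^ 2) ∂μ
      ≤ Real.sqrt (256 * c ^ 2 * Real.log J / n) := by
  haveI : NeZero J := ⟨by omega⟩
  have hne : (Finset.univ : Finset (Fin J)).Nonempty := Finset.univ_nonempty
  have hn0 : (0:ℝ) < n := by exact_mod_cast hn
  have hJ1 : (1:ℝ) < J := by exact_mod_cast hJ
  -- the sup of |pbar - p|
  set M : Ω → ℝ := fun ω => Finset.univ.sup' hne (fun j => |pbar ω j - p j|) with hMdef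
  have hMle : ∀ ω j, |pbar ω j - p j| ≤ M ω := fun ω j => Finset.le_sup' (fun j => |pbar ω j - p j|) (Finset.mem_univ j)
  have hM0 : ∀ ω, 0 ≤ M ω := fun ω =>
    le_trans (abs_nonneg _) (hMle ω ⟨0, by omega⟩)
  -- pointwise bound  S ω ≤ 2 M ω
  have hS_le : ∀ ω, ∑ j, (phat ω j - p j) ^ 2 ≤ 2 * M ω := by
    intro ω
    have h1 := proj_var (phat ω) (pbar ω) p (hphat0 ω) (hphat1 ω) hp0 hp1 (hphatMin ω)
    have h2 : ∑ j, (phat ω j - p j) * (pbar ω j - p j)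
        ≤ ∑ j, |phat ω j - p j| * M ω := by
      refine Finset.sum_le_sum fun j _ => ?_
      calc (phat ω j - p j) * (pbar ω j - p j) ≤ |(phat ω j - p j) * (pbar ω j - p j)| :=
            le_abs_self _
        _ = |phat ω j - p j| * |pbar ω j - p j| := abs_mul _ _
        _ ≤ |phat ω j - p j| * M ω :=
            mul_le_mul_of_nonneg_left (hMle ω j) (abs_nonneg _)
    have h3 : ∑ j, |phat ω j - p j| ≤ 2 := by
      have : ∑ j, |phat ω j - p j| ≤ ∑ j, (phat ω j + p j) := by
        refine Finset.sum_le_sum fun j _ => ?_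
        have := hphat0 ω j; have := hp0 j
        rw [abs_le]; constructor <;> linarith
      rw [Finset.sum_add_distrib, hphat1, hp1] at this
      linarith
    calc ∑ j, (phat ω j - p j) ^ 2 ≤ ∑ j, (phat ω j - p j) * (pbar ω j - p j) := h1
      _ ≤ ∑ j, |phat ω j - p j| * M ω := h2
      _ = (∑ j, |phat ω j - p j|) * M ω := (Finset.sum_mul _ _ _).symm
      _ ≤ 2 * M ω := mul_le_mul_of_nonneg_right h3 (hM0 ω)
  -- integrability facts
  have hXmeas : ∀ j, Measurable (fun ω => pbar ω j - p j) :=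
    fun j => (hpbarMeas j).sub measurable_const
  have hIntAbsX : ∀ j, Integrable (fun ω => |pbar ω j - p j|) μ := by
    intro j
    refine Integrable.mono' ((hInt j 1).add (hInt j (-1)))
      (hXmeas j).abs.aestronglyMeasurable (Filter.Eventually.of_forall fun ω => ?_)
    rw [Real.norm_eq_abs, abs_abs]
    have e1 := Real.add_one_le_exp (1 * (pbar ω j - p j))
    have e2 := Real.add_one_le_exp ((-1) * (pbar ω j - p j))
    have e3 := Real.exp_pos (1 * (pbar ω j - p j))
    have e4 := Real.exp_pos ((-1) * (pbar ω j - p j))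
    simp only [Pi.add_apply]
    rw [abs_le]; constructor <;> linarith
  have hMmeas : Measurable M := by
    have h := Finset.measurable_sup' hne
      (f := fun j (ω : Ω) => |pbar ω j - p j|) (fun j _ => (hXmeas j).abs)
    have : M = Finset.univ.sup' hne fun j (ω : Ω) => |pbar ω j - p j| := by
      funext ω; rw [Finset.sup'_apply]
    rwa [this]
  have hMint : Integrable M μ := by
    refine Integrable.mono' (integrable_finset_sum (f := fun j ω => |pbar ω j - p j|) Finset.univ fun j _ => hIntAbsX j)
      hMmeas.aestronglyMeasurable (Filter.Eventually.of_forall fun ω => ?_)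
    rw [Real.norm_eq_abs, abs_of_nonneg (hM0 ω)]
    refine Finset.sup'_le hne _ fun j _ => ?_
    exact Finset.single_le_sum (f := fun i => |pbar ω i - p i|)
      (fun i _ => abs_nonneg _) (Finset.mem_univ j)
  have hSmeas : Measurable (fun ω => ∑ j, (phat ω j - p j) ^ 2) :=
    Finset.measurable_sum _ fun j _ => ((hphatMeas j).sub measurable_const).pow_const 2
  have hSint : Integrable (fun ω => ∑ j, (phat ω j - p j) ^ 2) μ := by
    refine Integrable.mono' (hMint.const_mul 2) hSmeas.aestronglyMeasurable
      (Filter.Eventually.of_forall fun ω => ?_)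
    rw [Real.norm_eq_abs, abs_of_nonneg (Finset.sum_nonneg fun j _ => sq_nonneg _)]
    exact hS_le ω
  -- step 1 : ∫ S ≤ 2 ∫ M
  have step1 : ∫ ω, (∑ j, (phat ω j - p j) ^ 2) ∂μ ≤ 2 * ∫ ω, M ω ∂μ := by
    calc ∫ ω, (∑ j, (phat ω j - p j) ^ 2) ∂μ ≤ ∫ ω, 2 * M ω ∂μ :=
          integral_mono hSint (hMint.const_mul 2) hS_le
      _ = 2 * ∫ ω, M ω ∂μ := integral_const_mul 2 _
  -- choice of t
  set L : ℝ := Real.log (2 * J) with hLdef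
  have hL0 : 0 < L := Real.log_pos (by linarith)
  obtain ⟨sL, hsL2, hsL0⟩ : ∃ s : ℝ, s ^ 2 = 2 * L ∧ 0 < s :=
    ⟨Real.sqrt (2 * L), Real.sq_sqrt (by linarith), Real.sqrt_pos.mpr (by linarith)⟩
  obtain ⟨sn, hsn2, hsn0⟩ : ∃ s : ℝ, s ^ 2 = (n : ℝ) ∧ 0 < s :=
    ⟨Real.sqrt n, Real.sq_sqrt hn0.le, Real.sqrt_pos.mpr hn0⟩
  set t : ℝ := sL * sn / (2 * c) with htdef
  have ht0 : 0 < t := by positivity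
  -- the MGF exponent equals L for this t
  have ht2 : t ^ 2 = 2 * L * n / (4 * c ^ 2) := by
    rw [htdef, div_pow, mul_pow, hsL2, hsn2, mul_pow]
    norm_num
  have hB : t ^ 2 * (4 * c ^ 2) / (2 * n) = L := by
    rw [ht2]
    field_simp
  -- integrability of exp (t * M)
  have hExpSumInt : Integrable
      (fun ω => ∑ j, (Real.exp (t * (pbar ω j - p j))
        + Real.exp ((-t) * (pbar ω j - p j)))) μ :=
    integrable_finset_sum _ fun j _ => (hInt j t).add (hInt j (-t))
  have hExpPt : ∀ ω, Real.exp (t * M ω)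
      ≤ ∑ j, (Real.exp (t * (pbar ω j - p j)) + Real.exp ((-t) * (pbar ω j - p j))) := by
    intro ω
    obtain ⟨j, -, hj⟩ := Finset.exists_mem_eq_sup' hne (fun j => |pbar ω j - p j|)
    have h1 : Real.exp (t * M ω)
        ≤ Real.exp (t * (pbar ω j - p j)) + Real.exp ((-t) * (pbar ω j - p j)) := by
      rw [hMdef]
      simp only []
      rw [hj]
      rcases abs_cases (pbar ω j - p j) with ⟨h, -⟩ | ⟨h, -⟩ <;> rw [h]
      · nlinarith [Real.exp_pos ((-t) * (pbar ω j - p j)),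
          Real.exp_pos (t * (pbar ω j - p j))]
      · have : t * -(pbar ω j - p j) = (-t) * (pbar ω j - p j) := by ring
        rw [this]
        nlinarith [Real.exp_pos ((-t) * (pbar ω j - p j)),
          Real.exp_pos (t * (pbar ω j - p j))]
    refine h1.trans (Finset.single_le_sum (f := fun j =>
      Real.exp (t * (pbar ω j - p j)) + Real.exp ((-t) * (pbar ω j - p j)))
      (fun i _ => by positivity) (Finset.mem_univ j))
  have hExpMint : Integrable (fun ω => Real.exp (t * M ω)) μ := by
    refine Integrable.mono' hExpSumInt
      ((hMmeas.const_mul t).exp).aestronglyMeasurable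
      (Filter.Eventually.of_forall fun ω => ?_)
    rw [Real.norm_eq_abs, abs_of_nonneg (Real.exp_pos _).le]
    exact hExpPt ω
  -- Jensen
  have hJensen : Real.exp (t * ∫ ω, M ω ∂μ) ≤ ∫ ω, Real.exp (t * M ω) ∂μ := by
    have h := convexOn_exp.map_integral_le (μ := μ) (f := fun ω => t * M ω)
      Real.continuous_exp.continuousOn isClosed_univ
      (Filter.Eventually.of_forall fun ω => Set.mem_univ _)
      (hMint.const_mul t) (by exact hExpMint)
    rwa [integral_const_mul] at h
  -- Chernoff sum bound
  have hChern : ∫ ω, Real.exp (t * M ω) ∂μ ≤ (2 * J) * Real.exp L := by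
    calc ∫ ω, Real.exp (t * M ω) ∂μ
        ≤ ∫ ω, (∑ j, (Real.exp (t * (pbar ω j - p j))
            + Real.exp ((-t) * (pbar ω j - p j)))) ∂μ :=
          integral_mono hExpMint hExpSumInt hExpPt
      _ = ∑ j, ((∫ ω, Real.exp (t * (pbar ω j - p j)) ∂μ)
            + ∫ ω, Real.exp ((-t) * (pbar ω j - p j)) ∂μ) := by
          rw [integral_finset_sum (f := fun j ω => Real.exp (t * (pbar ω j - p j))
            + Real.exp ((-t) * (pbar ω j - p j))) _
            (fun j _ => (hInt j t).add (hInt j (-t)))]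
          exact Finset.sum_congr rfl fun j _ => integral_add (hInt j t) (hInt j (-t))
      _ ≤ ∑ _j : Fin J, (Real.exp L + Real.exp L) := by
          refine Finset.sum_le_sum fun j _ => ?_
          have h1 := hMGF j t
          have h2 := hMGF j (-t)
          rw [hB] at h1
          rw [show (-t) ^ 2 * (4 * c ^ 2) / (2 * n) = t ^ 2 * (4 * c ^ 2) / (2 * n) by ring,
            hB] at h2
          exact add_le_add h1 h2
      _ = (2 * J) * Real.exp L := by
          rw [Finset.sum_const, Finset.card_univ, Fintype.card_fin, nsmul_eq_mul]
          ring
  -- deduce ∫ M ≤ 2 L / t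
  have hIntM : ∫ ω, M ω ∂μ ≤ 2 * L / t := by
    have h := hJensen.trans hChern
    have h2 : t * ∫ ω, M ω ∂μ ≤ L + L := by
      have hlog := Real.log_le_log (Real.exp_pos _) h
      rw [Real.log_exp, Real.log_mul (by positivity) (Real.exp_ne_zero _),
        Real.log_exp] at hlog
      rw [hLdef] at hlog ⊢
      push_cast at hlog ⊢
      linarith
    rw [div_eq_inv_mul, ← mul_le_mul_iff_right₀ ht0, ← mul_assoc, mul_inv_cancel₀ ht0.ne',
      one_mul]
    linarith
  -- final numeric bound
  have hlogJ0 : 0 < Real.log J := Real.log_pos hJ1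
  have hlogJ : L ≤ 8 * Real.log J := by
    have h2 : Real.log 2 ≤ Real.log J := Real.log_le_log (by norm_num) (by exact_mod_cast hJ)
    rw [hLdef, Real.log_mul (by norm_num) (by positivity)]
    linarith
  have hfinal : 2 * (2 * L / t) ≤ Real.sqrt (256 * c ^ 2 * Real.log J / n) := by
    have h1 : 2 * (2 * L / t) = 8 * L * c / (sL * sn) := by
      rw [htdef]
      field_simp
      ring
    have hsq : (8 * L * c / (sL * sn)) ^ 2 = 32 * L * c ^ 2 / n := by
      rw [div_pow, mul_pow sL sn, hsL2, hsn2,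
        div_eq_div_iff (mul_pos (mul_pos two_pos hL0) hn0).ne' hn0.ne']
      ring
    have hkey : L * c ^ 2 * n ≤ 8 * Real.log J * c ^ 2 * n := by
      have h2 := mul_le_mul_of_nonneg_right hlogJ (sq_nonneg c)
      exact mul_le_mul_of_nonneg_right h2 hn0.le
    rw [h1, Real.le_sqrt (by positivity)
      (div_nonneg (mul_nonneg (by positivity) hlogJ0.le) hn0.le), hsq,
      div_le_div_iff₀ hn0 hn0]
    nlinarith [hkey]
  calc ∫ ω, (∑ j, (phat ω j - p j) ^ 2) ∂μ ≤ 2 * ∫ ω, M ω ∂μ := step1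
    _ ≤ 2 * (2 * L / t) := by linarith [hIntM]
    _ ≤ _ := hfinal
end

section
/- Least-squares projection onto a symmetric convex body (Lemma 1 of Nikolov–Talwar–Zhang, as used in the paper). Let L ⊆ ℝ^d be a nonempty closed convex set with L = −L, let y ∈ L, let z ∈ ℝ^d, and set ȳ = y + z. Let ŷ be any minimizer of ‖w − ȳ‖₂² over w ∈ L. Then ‖ŷ − y‖₂² ≤ 4 · min( ‖z‖₂² , sup_{x ∈ L} |⟨x, z⟩| ). -/
open scoped RealInnerProductSpace ENNReal

/-- Nikolov–Talwar–Zhang, Lemma 1: least-squares projection onto a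
symmetric closed convex set. If `y ∈ L`, `ȳ = y + z`, and `ŷ` minimizes `‖w - ȳ‖₂²` over
`w ∈ L`, then `‖ŷ - y‖₂² ≤ 4 min(‖z‖₂², sup_{x ∈ L} |⟨x, z⟩|)` (the supremum is taken in
`ℝ≥0∞` so that it is meaningful even when `L` is unbounded). -/
theorem ntz_symmetric_projection
    (d : ℕ) (L : Set (EuclideanSpace ℝ (Fin d)))
    (hne : L.Nonempty) (hclosed : IsClosed L) (hconv : Convex ℝ L) (hsymm : L = -L)
    (y z ybar yhat : EuclideanSpace ℝ (Fin d))
    (hy : y ∈ L) (hybar : ybar = y + z)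
    (hyhatMem : yhat ∈ L)
    (hyhatMin : ∀ w ∈ L, ‖yhat - ybar‖ ^ 2 ≤ ‖w - ybar‖ ^ 2) :
    ENNReal.ofReal (‖yhat - y‖ ^ 2)
      ≤ 4 * min (ENNReal.ofReal (‖z‖ ^ 2)) (⨆ x ∈ L, ENNReal.ofReal |⟪x, z⟫|) := by
  have hproj : ‖yhat - ybar‖ ^ 2 ≤ ‖z‖ ^ 2 := by
    have := hyhatMin y hy
    have hyz : ‖y - ybar‖ = ‖z‖ := by
      rw [hybar]
      simp [norm_sub_rev]
    rwa [hyz] at this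
  have hnorm : ‖yhat - ybar‖ ≤ ‖z‖ := by
    nlinarith [norm_nonneg (yhat - ybar), norm_nonneg z]
  have bound1 : ENNReal.ofReal (‖yhat - y‖ ^ 2) ≤ 4 * ENNReal.ofReal (‖z‖ ^ 2) := by
    have h1 : ‖yhat - y‖ ≤ 2 * ‖z‖ := by
      calc ‖yhat - y‖ ≤ ‖yhat - ybar‖ + ‖ybar - y‖ := norm_sub_le_norm_sub_add_norm_sub _ _ _
        _ ≤ ‖z‖ + ‖z‖ := by
            have : ‖ybar - y‖ = ‖z‖ := by rw [hybar]; simp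
            linarith
        _ = 2 * ‖z‖ := by ring
    have h2 : ‖yhat - y‖ ^ 2 ≤ 4 * ‖z‖ ^ 2 := by
      nlinarith [norm_nonneg (yhat - y), norm_nonneg z]
    calc ENNReal.ofReal (‖yhat - y‖ ^ 2) ≤ ENNReal.ofReal (4 * ‖z‖ ^ 2) :=
          ENNReal.ofReal_le_ofReal h2
      _ = 4 * ENNReal.ofReal (‖z‖ ^ 2) := by
          rw [ENNReal.ofReal_mul (by norm_num)]
          norm_num
  have bound2 : ENNReal.ofReal (‖yhat - y‖ ^ 2)
      ≤ 4 * (⨆ x ∈ L, ENNReal.ofReal |⟪x, z⟫|) := by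
    have hexp : ‖yhat - y‖ ^ 2 = ‖yhat - ybar‖ ^ 2 + 2 * ⟪yhat - ybar, z⟫ + ‖z‖ ^ 2 := by
      have : yhat - y = (yhat - ybar) + z := by rw [hybar]; abel
      rw [this, norm_add_sq_real]
    have hinner : ⟪yhat - ybar, z⟫ = ⟪yhat, z⟫ - ⟪y, z⟫ - ‖z‖ ^ 2 := by
      rw [hybar, sub_add_eq_sub_sub, inner_sub_left, inner_sub_left,
        real_inner_self_eq_norm_sq]
    have key : ‖yhat - y‖ ^ 2 ≤ 2 * |⟪yhat, z⟫| + 2 * |⟪y, z⟫| := by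
      have h1 := le_abs_self (⟪yhat, z⟫ : ℝ)
      have h2 := neg_abs_le (⟪y, z⟫ : ℝ)
      rw [hexp, hinner]
      nlinarith
    have hS : ∀ x ∈ L, ENNReal.ofReal |⟪x, z⟫| ≤ ⨆ x ∈ L, ENNReal.ofReal |⟪x, z⟫| := by
      intro x hx
      exact le_iSup₂ (f := fun x _ => ENNReal.ofReal |⟪x, z⟫|) x hx
    calc ENNReal.ofReal (‖yhat - y‖ ^ 2)
        ≤ ENNReal.ofReal (2 * |⟪yhat, z⟫| + 2 * |⟪y, z⟫|) := ENNReal.ofReal_le_ofReal key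
      _ ≤ ENNReal.ofReal (2 * |⟪yhat, z⟫|) + ENNReal.ofReal (2 * |⟪y, z⟫|) :=
          ENNReal.ofReal_add_le
      _ = 2 * ENNReal.ofReal |⟪yhat, z⟫| + 2 * ENNReal.ofReal |⟪y, z⟫| := by
          rw [ENNReal.ofReal_mul (by norm_num), ENNReal.ofReal_mul (by norm_num)]
          norm_num
      _ ≤ 2 * (⨆ x ∈ L, ENNReal.ofReal |⟪x, z⟫|) + 2 * (⨆ x ∈ L, ENNReal.ofReal |⟪x, z⟫|) := by
          gcongr
          exacts [hS yhat hyhatMem, hS y hy]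
      _ = 4 * (⨆ x ∈ L, ENNReal.ofReal |⟪x, z⟫|) := by ring
  rcases le_total (ENNReal.ofReal (‖z‖ ^ 2)) (⨆ x ∈ L, ENNReal.ofReal |⟪x, z⟫|) with h | h
  · rwa [min_eq_left h]
  · rwa [min_eq_right h]
end

section
/- Least-squares projection onto a symmetric convex polytope (Corollary 2.2 / Fact 2.1 of the paper). Let a₁, …, a_J ∈ ℝ^d and let L = {Σ_{j=1}^J x_j a_j : x ∈ ℝ^J, ‖x‖₁ ≤ 1} be the symmetric convex polytope with vertex set among {±a_j}. Let y ∈ L, z ∈ ℝ^d, ȳ = y + z, and let ŷ be any minimizer of ‖w − ȳ‖₂² over w ∈ L. Then ‖ŷ − y‖₂² ≤ 4 · max_{j ∈ [J]} |⟨z, a_j⟩|. -/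
open scoped RealInnerProductSpace

/-- Corollary 2.2 / Fact 2.1: least-squares projection onto the
symmetric convex polytope `L = {∑ⱼ xⱼ aⱼ : ‖x‖₁ ≤ 1}`. If `y ∈ L`, `ȳ = y + z`, and `ŷ`
minimizes `‖w - ȳ‖₂²` over `w ∈ L`, then `‖ŷ - y‖₂² ≤ 4 maxⱼ |⟨z, aⱼ⟩|`. -/
theorem polytope_projection
    (d J : ℕ) (hJ : 1 ≤ J)
    (a : Fin J → EuclideanSpace ℝ (Fin d))
    (L : Set (EuclideanSpace ℝ (Fin d)))
    (hL : L = {w | ∃ x : Fin J → ℝ, (∑ j, |x j|) ≤ 1 ∧ w = ∑ j, x j • a j})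
    (y z ybar yhat : EuclideanSpace ℝ (Fin d))
    (hy : y ∈ L) (hybar : ybar = y + z)
    (hyhatMem : yhat ∈ L)
    (hyhatMin : ∀ w ∈ L, ‖yhat - ybar‖ ^ 2 ≤ ‖w - ybar‖ ^ 2) :
    ‖yhat - y‖ ^ 2
      ≤ 4 * Finset.univ.sup' ⟨⟨0, hJ⟩, Finset.mem_univ _⟩ (fun j => |⟪z, a j⟫|) := by
  set M := Finset.univ.sup' ⟨⟨0, hJ⟩, Finset.mem_univ _⟩ (fun j => |⟪z, a j⟫|) with hM
  have hMnonneg : 0 ≤ M :=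
    le_trans (abs_nonneg ⟪z, a ⟨0, hJ⟩⟫) (Finset.le_sup' (fun j => |⟪z, a j⟫|) (Finset.mem_univ (⟨0, hJ⟩ : Fin J)))
  have hbound : ∀ w ∈ L, |⟪z, w⟫| ≤ M := by
    intro w hw
    rw [hL] at hw
    obtain ⟨x, hx1, rfl⟩ := hw
    rw [inner_sum]
    calc |∑ j, ⟪z, x j • a j⟫|
        ≤ ∑ j, |x j| * |⟪z, a j⟫| := by
          refine (Finset.abs_sum_le_sum_abs _ _).trans ?_
          apply Finset.sum_le_sum
          intro j _
          rw [real_inner_smul_right, abs_mul]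
      _ ≤ ∑ j : Fin J, |x j| * M := by
          apply Finset.sum_le_sum
          intro j _
          exact mul_le_mul_of_nonneg_left (Finset.le_sup' (fun j => |⟪z, a j⟫|) (Finset.mem_univ j)) (abs_nonneg _)
      _ ≤ 1 * M := by
          rw [← Finset.sum_mul]
          exact mul_le_mul_of_nonneg_right hx1 hMnonneg
      _ = M := one_mul M
  have hmin := hyhatMin y hy
  have h1 : yhat - ybar = (yhat - y) - z := by rw [hybar]; abel
  have h2 : y - ybar = -z := by rw [hybar]; abel
  rw [h1, h2, norm_neg] at hmin
  have hexp : ‖(yhat - y) - z‖ ^ 2 = ‖yhat - y‖ ^ 2 - 2 * ⟪yhat - y, z⟫ + ‖z‖ ^ 2 := by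
    rw [norm_sub_sq_real]
  have key : ‖yhat - y‖ ^ 2 ≤ 2 * ⟪yhat - y, z⟫ := by nlinarith
  have hinner : ⟪yhat - y, z⟫ = ⟪z, yhat⟫ - ⟪z, y⟫ := by
    rw [inner_sub_left, real_inner_comm yhat z, real_inner_comm y z]
  rw [hinner] at key
  have hy' := abs_le.mp (hbound y hy)
  have hyhat' := abs_le.mp (hbound yhat hyhatMem)
  linarith [hy'.1, hy'.2, hyhat'.1, hyhat'.2]
end
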